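/- arXiv:2402.10121 — 12 statements merged into one kernel-verified Lean document; each statement's English description precedes it below -/
import Mathlib

section
/- If $k$ is a positive integer divisible by $6$, then $v_2(m(k)) = v_2(k) + 2$, where $v_2$ denotes the $2$-adic valuation. -/
open Polynomial

/-!  Auxiliary: the ring of Eisenstein integers `ℤ[ω]`, `ω² + ω + 1 = 0`,
used for the lower bound. -/

@[ext]
structure Eis where
  re : ℤ
  im : ℤ

namespace Eis
instance : Zero Eis := ⟨⟨0, 0⟩⟩
instance : One Eis := ⟨⟨1, 0⟩⟩
instance : Add Eis := ⟨fun x y => ⟨x.re + y.re, x.im + y.im⟩⟩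
instance : Neg Eis := ⟨fun x => ⟨-x.re, -x.im⟩⟩
instance : Mul Eis := ⟨fun x y => ⟨x.re * y.re - x.im * y.im,
    x.re * y.im + x.im * y.re - x.im * y.im⟩⟩
@[simp] lemma zero_re : (0 : Eis).re = 0 := rfl
@[simp] lemma zero_im : (0 : Eis).im = 0 := rfl
@[simp] lemma one_re : (1 : Eis).re = 1 := rfl
@[simp] lemma one_im : (1 : Eis).im = 0 := rfl
@[simp] lemma add_re (x y : Eis) : (x + y).re = x.re + y.re := rfl
@[simp] lemma add_im (x y : Eis) : (x + y).im = x.im + y.im := rfl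
@[simp] lemma neg_re (x : Eis) : (-x).re = -x.re := rfl
@[simp] lemma neg_im (x : Eis) : (-x).im = -x.im := rfl
@[simp] lemma mul_re (x y : Eis) : (x * y).re = x.re * y.re - x.im * y.im := rfl
@[simp] lemma mul_im (x y : Eis) :
    (x * y).im = x.re * y.im + x.im * y.re - x.im * y.im := rfl

instance commRing : CommRing Eis where
  zero := 0
  one := 1
  add := (· + ·)
  mul := (· * ·)
  neg := Neg.neg
  add_assoc := by intros; ext <;> simp <;> ring
  zero_add := by intros; ext <;> simp
  add_zero := by intros; ext <;> simp
  add_comm := by intros; ext <;> simp <;> ring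
  neg_add_cancel := by intros; ext <;> simp
  mul_assoc := by intros; ext <;> simp <;> ring
  one_mul := by intros; ext <;> simp
  mul_one := by intros; ext <;> simp
  left_distrib := by intros; ext <;> simp <;> ring
  right_distrib := by intros; ext <;> simp <;> ring
  mul_comm := by intros; ext <;> simp <;> ring
  zero_mul := by intros; ext <;> simp
  mul_zero := by intros; ext <;> simp
  nsmul := fun n x => ⟨n * x.re, n * x.im⟩
  nsmul_zero := by intros; ext <;> show ((0:ℕ):ℤ) * _ = 0 <;> simp
  nsmul_succ := by intros; ext <;> show ((_ + 1 : ℕ):ℤ) * _ = ((_:ℕ):ℤ) * _ + _ <;> push_cast <;> ring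
  zsmul := fun n x => ⟨n * x.re, n * x.im⟩
  zsmul_zero' := by intros; ext <;> show (0:ℤ) * _ = 0 <;> simp
  zsmul_succ' := by intros; ext <;> show ((_ + 1 : ℕ):ℤ) * _ = ((_:ℕ):ℤ) * _ + _ <;> push_cast <;> ring
  zsmul_neg' := by intros; ext <;> show (Int.negSucc _) * _ = -(((_ + 1 : ℕ):ℤ) * _) <;> simp [Int.negSucc_eq] <;> ring

@[simp] lemma zsmul_re (n : ℤ) (x : Eis) : (n • x).re = n * x.re := rfl
@[simp] lemma zsmul_im (n : ℤ) (x : Eis) : (n • x).im = n * x.im := rfl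

def ω : Eis := ⟨0, 1⟩
@[simp] lemma omega_re : ω.re = 0 := rfl
@[simp] lemma omega_im : ω.im = 1 := rfl

lemma pow3_re (a b : ℤ) : ((⟨a, b⟩ : Eis) ^ 3).re = a^3 - 3*a*b^2 + b^3 := by
  simp [pow_succ]; ring

lemma pow3_im (a b : ℤ) : ((⟨a, b⟩ : Eis) ^ 3).im = 3*a^2*b - 3*a*b^2 := by
  simp [pow_succ]; ring

/-- if g is a unit mod 2, then g^3 ≡ 1 mod 2 (cube of any element of F₄ˣ is 1). -/
lemma cube_odd (g : Eis) (h : ¬(Even g.re ∧ Even g.im)) :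
    ∃ c d : ℤ, g ^ 3 = ⟨2*c+1, 2*d⟩ := by
  obtain ⟨a, b⟩ := g
  have h1 : Odd ((⟨a, b⟩ : Eis) ^ 3).re := by
    rw [pow3_re]
    rcases Int.even_or_odd a with ha | ha <;> rcases Int.even_or_odd b with hb | hb
    · exact absurd ⟨ha, hb⟩ h
    · obtain ⟨m, rfl⟩ := ha; obtain ⟨n, rfl⟩ := hb
      exact ⟨4*m^3 - 12*m*n^2 - 12*m*n - 3*m + 4*n^3 + 6*n^2 + 3*n, by ring⟩
    · obtain ⟨m, rfl⟩ := ha; obtain ⟨n, rfl⟩ := hb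
      exact ⟨4*m^3 + 6*m^2 + 3*m - 12*m*n^2 - 6*n^2 + 4*n^3, by ring⟩
    · obtain ⟨m, rfl⟩ := ha; obtain ⟨n, rfl⟩ := hb
      exact ⟨4*m^3 + 6*m^2 - 12*m*n^2 - 12*m*n + 4*n^3 - 3*n - 1, by ring⟩
  have h2 : Even ((⟨a, b⟩ : Eis) ^ 3).im := by
    rw [pow3_im]
    rcases Int.even_or_odd a with ha | ha <;> rcases Int.even_or_odd b with hb | hb
    · exact absurd ⟨ha, hb⟩ h
    · obtain ⟨m, rfl⟩ := ha; obtain ⟨n, rfl⟩ := hb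
      exact ⟨3*m*(2*n+1)*(m+m-2*n-1), by ring⟩
    · obtain ⟨m, rfl⟩ := ha; obtain ⟨n, rfl⟩ := hb
      exact ⟨3*n*(2*m+1)*(2*m+1-n-n), by ring⟩
    · obtain ⟨m, rfl⟩ := ha; obtain ⟨n, rfl⟩ := hb
      exact ⟨3*(2*m+1)*(2*n+1)*(m-n), by ring⟩
  obtain ⟨c, hc⟩ := h1
  obtain ⟨d, hd⟩ := h2
  refine ⟨c, d, ?_⟩
  ext
  · show _ = 2 * c + 1
    omega
  · show _ = 2 * d
    omega

lemma im_sq (x : Eis) : (x ^ 2).im = x.im * (2 * x.re - x.im) := by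
  rw [sq]; simp; ring

lemma dvd_im_sq {s : ℕ} (hs : 1 ≤ s) {x : Eis} (h : (2:ℤ) ^ s ∣ x.im) :
    (2:ℤ) ^ (s + 1) ∣ (x ^ 2).im := by
  obtain ⟨t, rfl⟩ : ∃ t, s = t + 1 := ⟨s - 1, (Nat.succ_pred_eq_of_pos hs).symm⟩
  obtain ⟨c, hc⟩ := h
  rw [im_sq, hc]
  exact ⟨c * x.re - 2 ^ t * c ^ 2, by ring⟩

lemma dvd_im_mul {s : ℕ} {x y : Eis} (hx : (2:ℤ)^s ∣ x.im) (hy : (2:ℤ)^s ∣ y.im) :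
    (2:ℤ)^s ∣ (x*y).im := by
  rw [mul_im]
  exact dvd_sub (dvd_add (hy.mul_left _) (hx.mul_right _)) (hx.mul_right _)

lemma dvd_im_pow {s : ℕ} {x : Eis} (h : (2:ℤ)^s ∣ x.im) (m : ℕ) :
    (2:ℤ)^s ∣ (x^m).im := by
  induction m with
  | zero => simp
  | succ t ih => rw [pow_succ]; exact dvd_im_mul ih h

lemma key_odd (g : Eis) (h : ¬(Even g.re ∧ Even g.im)) :
    ∀ v : ℕ, 1 ≤ v → (2:ℤ)^(v+2) ∣ (g ^ (3 * 2^v)).im := by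
  have base : (2:ℤ)^3 ∣ (g ^ 6).im := by
    obtain ⟨c, d, hδ⟩ := cube_odd g h
    have h6 : g ^ 6 = (g ^ 3) ^ 2 := by rw [← pow_mul]
    rw [h6, im_sq, hδ]
    show (2:ℤ)^3 ∣ 2*d * (2 * (2*c+1) - 2*d)
    rcases Int.even_or_odd d with hd | hd
    · obtain ⟨e, rfl⟩ := hd
      exact ⟨e*(2*c+1) - 2*e^2, by ring⟩
    · obtain ⟨e, rfl⟩ := hd
      exact ⟨(2*e+1)*(c-e), by ring⟩
  intro v
  induction v with
  | zero => intro h0; exact absurd h0 (by omega)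
  | succ t ih =>
    intro _
    by_cases ht : t = 0
    · subst ht
      have h1 : 3 * 2 ^ (0+1) = 6 := by norm_num
      have h2 : (0:ℕ)+1+2 = 3 := by norm_num
      rw [h1, h2]
      exact base
    · have h1 : 3 * 2 ^ (t + 1) = 3 * 2 ^ t * 2 := by ring
      rw [h1, pow_mul]
      have := dvd_im_sq (s := t + 2) (by omega) (ih (by omega))
      convert this using 2

lemma key_dvd (v m : ℕ) (hv : 1 ≤ v) (hm : 1 ≤ m) (g : Eis) :
    (2:ℤ)^(v+2) ∣ (g ^ (3 * 2^v * m)).im := by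
  by_cases h : Even g.re ∧ Even g.im
  · obtain ⟨⟨p, hp⟩, ⟨q, hq⟩⟩ := h
    have hg : g = (2:ℤ) • (⟨p, q⟩ : Eis) := by
      ext
      · show g.re = 2 * p
        omega
      · show g.im = 2 * q
        omega
    rw [hg, _root_.smul_pow, zsmul_im]
    have h1 : v < 2 ^ v := Nat.lt_two_pow_self
    have hk : v + 2 ≤ 3 * 2 ^ v * m := by
      have h3 : 3 * 2 ^ v ≤ 3 * 2 ^ v * m := Nat.le_mul_of_pos_right _ (by omega)
      omega
    exact ((pow_dvd_pow (2:ℤ) hk)).mul_right _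
  · rw [pow_mul]
    exact dvd_im_pow (key_odd g h v hv) m

end Eis


/-- `J(k,R)`: the additive subgroup of `R` generated by `k`-th powers of elements of `R`. -/
def Jgrp (k : ℕ) (R : Type*) [CommRing R] : AddSubgroup R :=
  AddSubgroup.closure {r : R | ∃ g : R, r = g ^ k}

/-- `G(k,R) = {m : ℤ | ∀ r : R, m • r ∈ J(k,R)}`, an additive subgroup of `ℤ`
(realized as an ideal of `ℤ`, which has the same underlying set). -/
def Ggrp (k : ℕ) (R : Type*) [CommRing R] : Ideal ℤ where
  carrier := {m : ℤ | ∀ r : R, m • r ∈ Jgrp k R}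
  add_mem' := fun {a b} ha hb r => by
    simpa [add_smul] using (Jgrp k R).add_mem (ha r) (hb r)
  zero_mem' := fun r => by simpa using (Jgrp k R).zero_mem
  smul_mem' := fun c m hm r => by
    have h := hm (c • r)
    rw [smul_smul, mul_comm] at h
    simpa [smul_smul] using h

/-- `m(k,R)`: the nonnegative generator of `G(k,R)`. -/
noncomputable def mval (k : ℕ) (R : Type*) [CommRing R] : ℕ :=
  (Submodule.IsPrincipal.generator (Ggrp k R)).natAbs

namespace JAux

variable {k : ℕ}

lemma gen_mem (g : Polynomial ℤ) : g ^ k ∈ Jgrp k (Polynomial ℤ) :=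
  AddSubgroup.subset_closure ⟨g, rfl⟩

lemma comp_mem {f : Polynomial ℤ} (q : Polynomial ℤ) (hf : f ∈ Jgrp k (Polynomial ℤ)) :
    f.comp q ∈ Jgrp k (Polynomial ℤ) := by
  induction hf using AddSubgroup.closure_induction with
  | mem x hx =>
    obtain ⟨g, rfl⟩ := hx
    rw [Polynomial.pow_comp]
    exact gen_mem _
  | zero => simpa using (Jgrp k (Polynomial ℤ)).zero_mem
  | add x y _ _ ihx ihy => simpa [Polynomial.add_comp] using AddSubgroup.add_mem _ ihx ihy
  | neg x _ ihx => simpa [Polynomial.neg_comp] using AddSubgroup.neg_mem _ ihx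

lemma const_mem (c : ℤ) : (C c : Polynomial ℤ) ∈ Jgrp k (Polynomial ℤ) := by
  have h1 : (1 : Polynomial ℤ) ∈ Jgrp k (Polynomial ℤ) := by
    simpa using gen_mem (k := k) 1
  have := AddSubgroup.zsmul_mem _ h1 c
  simpa [zsmul_eq_mul] using this

end JAux

namespace JAux

lemma coeff_comp_X_add_one (f : Polynomial ℤ) (d : ℕ) (hdeg : f.natDegree ≤ d) (j : ℕ) :
    (f.comp (X + 1)).coeff j = ∑ i ∈ Finset.range (d + 1), f.coeff i * (i.choose j) := by
  rw [Polynomial.comp_eq_sum_left]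
  rw [f.sum_over_range' (by simp) (d + 1) (by omega)]
  rw [Polynomial.finset_sum_coeff]
  refine Finset.sum_congr rfl fun i _ => ?_
  rw [Polynomial.coeff_C_mul, Polynomial.coeff_X_add_one_pow]

lemma delta_natDegree_le {f : Polynomial ℤ} {e : ℕ} (hdeg : f.natDegree ≤ e + 1) :
    (f.comp (X + 1) - f).natDegree ≤ e := by
  rw [Polynomial.natDegree_le_iff_coeff_eq_zero]
  intro m hm
  rw [Polynomial.coeff_sub, coeff_comp_X_add_one f (e+1) hdeg m]
  rcases Nat.lt_or_ge m (e + 2) with hm2 | hm2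
  · -- m = e + 1
    have hme : m = e + 1 := by omega
    subst hme
    rw [Finset.sum_range_succ]
    have hz : ∑ i ∈ Finset.range (e+1), f.coeff i * (i.choose (e+1) : ℤ) = 0 := by
      refine Finset.sum_eq_zero fun i hi => ?_
      rw [Nat.choose_eq_zero_of_lt (by simpa using hi)]
      simp
    rw [hz]
    simp
  · -- m ≥ e + 2 : everything vanishes
    have hz : ∑ i ∈ Finset.range (e+2), f.coeff i * (i.choose m : ℤ) = 0 := by
      refine Finset.sum_eq_zero fun i hi => ?_
      rw [Nat.choose_eq_zero_of_lt (by simp at hi; omega)]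
      simp
    rw [hz, Polynomial.coeff_eq_zero_of_natDegree_lt (by omega)]
    simp

lemma delta_coeff {f : Polynomial ℤ} {e : ℕ} (hdeg : f.natDegree ≤ e + 1) :
    (f.comp (X + 1) - f).coeff e = (e + 1 : ℤ) * f.coeff (e + 1) := by
  rw [Polynomial.coeff_sub, coeff_comp_X_add_one f (e+1) hdeg e]
  rw [Finset.sum_range_succ, Finset.sum_range_succ]
  have hz : ∑ i ∈ Finset.range e, f.coeff i * (i.choose e : ℤ) = 0 := by
    refine Finset.sum_eq_zero fun i hi => ?_
    rw [Nat.choose_eq_zero_of_lt (by simpa using hi)]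
    simp
  rw [hz]
  rw [Nat.choose_self, Nat.choose_succ_self_right]
  push_cast
  ring

lemma descending_mem (hk : 1 ≤ k) :
    ∀ t, t ≤ k - 1 → ∃ f ∈ Jgrp k (Polynomial ℤ),
      f.natDegree ≤ k - t ∧ f.coeff (k - t) = (k.descFactorial t : ℤ) := by
  intro t
  induction t with
  | zero =>
    intro _
    refine ⟨X ^ k, gen_mem X, ?_, ?_⟩
    · simp [Polynomial.natDegree_X_pow]
    · simp [Polynomial.coeff_X_pow]
  | succ t ih =>
    intro ht
    obtain ⟨f, hfJ, hdeg, hcoeff⟩ := ih (by omega)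
    obtain ⟨e, he⟩ : ∃ e, k - t = e + 1 := ⟨k - t - 1, by omega⟩
    refine ⟨f.comp (X + 1) - f, ?_, ?_, ?_⟩
    · exact AddSubgroup.sub_mem _ (comp_mem _ hfJ) hfJ
    · have := delta_natDegree_le (f := f) (e := e) (by omega)
      have hke : k - (t+1) = e := by omega
      rw [hke]
      exact this
    · have hke : k - (t+1) = e := by omega
      rw [hke, delta_coeff (by omega)]
      rw [← he, hcoeff, Nat.descFactorial_succ, he]
      push_cast
      ring

lemma factorial_smul_X_mem (hk : 1 ≤ k) :
    ((k.factorial : ℤ)) • (X : Polynomial ℤ) ∈ Jgrp k (Polynomial ℤ) := by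
  obtain ⟨f, hfJ, hdeg, hcoeff⟩ := descending_mem hk (k - 1) le_rfl
  have h1 : k - (k - 1) = 1 := by omega
  rw [h1] at hdeg hcoeff
  have hfact : (k.descFactorial (k-1) : ℤ) = (k.factorial : ℤ) := by
    have := Nat.descFactorial_self k
    have h2 := Nat.descFactorial_succ k (k - 1)
    rw [show k - 1 + 1 = k from by omega] at h2
    rw [h1, one_mul] at h2
    rw [← h2, this]
  have heq : f = C (f.coeff 1) * X + C (f.coeff 0) :=
    Polynomial.eq_X_add_C_of_natDegree_le_one hdeg
  have : ((k.factorial : ℤ)) • (X : Polynomial ℤ) = f - C (f.coeff 0) := by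
    rw [heq, hcoeff, hfact]
    simp [Polynomial.smul_eq_C_mul]
  rw [this]
  exact AddSubgroup.sub_mem _ hfJ (const_mem _)

lemma factorial_smul_mem (hk : 1 ≤ k) (p : Polynomial ℤ) :
    ((k.factorial : ℤ)) • p ∈ Jgrp k (Polynomial ℤ) := by
  have := comp_mem p (factorial_smul_X_mem hk)
  simpa [Polynomial.smul_comp] using this

end JAux

namespace JAux

lemma dvd_choose_four (k j v : ℕ) (hv : 2^v ∣ k) (hk : k ≠ 0) (hj : 2 ≤ j) :
    (2:ℤ)^(v+3) ∣ (k.choose j : ℤ) * 4^j := by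
  rcases le_or_gt (v + 3) (2 * j) with h | h
  · -- 2^{v+3} divides 4^j
    have h4 : (4:ℤ)^j = (2:ℤ)^(2*j) := by
      rw [pow_mul]; norm_num
    rw [h4]
    exact Dvd.dvd.mul_left (pow_dvd_pow 2 h) _
  · -- need 2^{v+3-2j} ∣ choose k j
    rcases le_or_gt j k with hjk | hjk
    swap
    · rw [Nat.choose_eq_zero_of_lt hjk]; simp
    have hC0 : k.choose j ≠ 0 := (Nat.choose_pos hjk).ne'
    have hj0 : j ≠ 0 := by omega
    -- j * choose k j = k * choose (k-1) (j-1)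
    have hid : j * k.choose j = k * (k-1).choose (j-1) := by
      have h0 := Nat.add_one_mul_choose_eq (k - 1) (j - 1)
      rw [show k-1+1 = k from by omega, show j-1+1 = j from by omega] at h0
      rw [mul_comm j (k.choose j)]
      exact h0.symm
    -- 2-adic valuations
    have hvk : v ≤ (j * k.choose j).factorization 2 := by
      have hdd : 2^v ∣ j * k.choose j := by
        rw [hid]; exact hv.mul_right _
      exact (Nat.Prime.pow_dvd_iff_le_factorization Nat.prime_two
        (Nat.mul_ne_zero hj0 hC0)).mp hdd
    rw [Nat.factorization_mul hj0 hC0] at hvk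
    have hjf : (j).factorization 2 ≤ j - 1 := by
      have h1 : 2 ^ j.factorization 2 ∣ j := Nat.ordProj_dvd j 2
      have h2 : 2 ^ j.factorization 2 ≤ j := Nat.le_of_dvd (by omega) h1
      have h3 : j.factorization 2 < 2 ^ j.factorization 2 := Nat.lt_two_pow_self
      omega
    have hCf : v + 3 - 2*j ≤ (k.choose j).factorization 2 := by
      simp only [Finsupp.add_apply] at hvk
      omega
    have hdvd : 2 ^ (v + 3 - 2*j) ∣ k.choose j :=
      (Nat.Prime.pow_dvd_iff_le_factorization Nat.prime_two hC0).mpr hCf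
    have hdvdZ : (2:ℤ) ^ (v + 3 - 2*j) ∣ (k.choose j : ℤ) := by
      exact_mod_cast Int.natCast_dvd_natCast.mpr hdvd
    have h4 : (4:ℤ)^j = (2:ℤ)^(2*j) := by rw [pow_mul]; norm_num
    rw [h4]
    have hsplit : (2:ℤ)^(v+3) = (2:ℤ)^(v+3-2*j) * (2:ℤ)^(2*j) := by
      rw [← pow_add]
      congr 1
      omega
    rw [hsplit]
    exact mul_dvd_mul hdvdZ dvd_rfl

lemma expand (v u : ℕ) (hk : k = 2^v * u) (hk1 : 1 ≤ k) (w : Polynomial ℤ) :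
    ∃ W : Polynomial ℤ,
      (1 + 4 * w)^k = 1 + ((2:Polynomial ℤ)^(v+2) * (u : Polynomial ℤ)) * w
        + (2:Polynomial ℤ)^(v+3) * W := by
  have hadd : (4 * w + 1)^k
      = ∑ j ∈ Finset.range (k+1), (4*w)^j * 1^(k-j) * (k.choose j : Polynomial ℤ) := by
    exact add_pow (4*w) 1 k
  have hdvd : ∀ j ∈ Finset.range (k+1), 2 ≤ j →
      (2:Polynomial ℤ)^(v+3) ∣ (4*w)^j * 1^(k-j) * (k.choose j : Polynomial ℤ) := by
    intro j _ hj
    have h1 : (2:ℤ)^(v+3) ∣ (k.choose j : ℤ) * 4^j :=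
      dvd_choose_four k j v (hk ▸ Dvd.intro u rfl) (by omega) hj
    obtain ⟨c, hc⟩ := h1
    refine ⟨C c * w^j, ?_⟩
    have : ((k.choose j : ℤ) * 4^j : ℤ) • (w^j) = ((2:ℤ)^(v+3) * c) • (w^j) := by rw [hc]
    calc (4*w)^j * 1^(k-j) * (k.choose j : Polynomial ℤ)
        = C ((k.choose j : ℤ) * 4^j) * w^j := by
          push_cast
          ring_nf
          simp [Polynomial.C_eq_natCast]
          ring
      _ = C ((2:ℤ)^(v+3) * c) * w^j := by rw [hc]
      _ = (2:Polynomial ℤ)^(v+3) * (C c * w^j) := by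
          rw [Polynomial.C_mul, Polynomial.C_pow]
          norm_num
          ring
  obtain ⟨K, rfl⟩ : ∃ K, k = K + 1 := ⟨k-1, by omega⟩
  have hdvdsum : (2:Polynomial ℤ)^(v+3) ∣
      ∑ i ∈ Finset.range K, (4*w)^(i+1+1) * 1^(K+1 - (i+1+1)) * ((K+1).choose (i+1+1) : Polynomial ℤ) := by
    refine Finset.dvd_sum fun i hi => ?_
    exact hdvd (i+1+1) (by simp at hi ⊢; omega) (by omega)
  obtain ⟨W, hW⟩ := hdvdsum
  refine ⟨W, ?_⟩
  have hcomm : (1 + 4*w)^(K+1) = (4*w + 1)^(K+1) := by ring_nf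
  rw [hcomm, hadd, Finset.sum_range_succ' _ (K+1), Finset.sum_range_succ' _ K, hW]
  have hkc : ((K+1 : ℕ) : Polynomial ℤ) = 2^v * (u : Polynomial ℤ) := by
    rw [show ((K+1 : ℕ) : Polynomial ℤ) = ((2^v * u : ℕ) : Polynomial ℤ) from by rw [← hk]]
    push_cast
    ring
  simp only [zero_add, pow_zero, pow_one, one_pow, mul_one, one_mul, Nat.choose_one_right,
    Nat.choose_zero_right, Nat.cast_one, hkc]
  ring

end JAux

namespace JAux

lemma iterate (v u : ℕ) (hk : k = 2^v * u) (hk1 : 1 ≤ k) :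
    ∀ t : ℕ, ∃ w : Polynomial ℤ,
      (2:Polynomial ℤ)^(v+2) * (u:Polynomial ℤ)^(t+1) * X + (2:Polynomial ℤ)^(v+3+t) * w
        ∈ Jgrp k (Polynomial ℤ) := by
  intro t
  induction t with
  | zero =>
    obtain ⟨W, hW⟩ := expand v u hk hk1 X
    refine ⟨W, ?_⟩
    have hmem : (1 + 4*X)^k - 1 ∈ Jgrp k (Polynomial ℤ) :=
      AddSubgroup.sub_mem _ (gen_mem _) (by simpa using gen_mem (k := k) 1)
    have heq : (1 + 4*X)^k - 1
        = 2^(v+2) * (u:Polynomial ℤ)^(0+1) * X + 2^(v+3+0) * W := by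
      rw [hW]; ring
    rwa [heq] at hmem
  | succ t ih =>
    obtain ⟨w, hw⟩ := ih
    obtain ⟨W, hW⟩ := expand v u hk hk1 w
    have hG : (1 + 4*w)^k - 1 ∈ Jgrp k (Polynomial ℤ) :=
      AddSubgroup.sub_mem _ (gen_mem _) (by simpa using gen_mem (k := k) 1)
    have hmem : (u:ℤ) • ((2:Polynomial ℤ)^(v+2) * (u:Polynomial ℤ)^(t+1) * X
          + (2:Polynomial ℤ)^(v+3+t) * w)
        - ((2:ℤ)^(t+1)) • ((1 + 4*w)^k - 1) ∈ Jgrp k (Polynomial ℤ) :=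
      AddSubgroup.sub_mem _ (AddSubgroup.zsmul_mem _ hw _) (AddSubgroup.zsmul_mem _ hG _)
    refine ⟨-W, ?_⟩
    have heq : (u:ℤ) • ((2:Polynomial ℤ)^(v+2) * (u:Polynomial ℤ)^(t+1) * X
          + (2:Polynomial ℤ)^(v+3+t) * w)
        - ((2:ℤ)^(t+1)) • ((1 + 4*w)^k - 1)
        = 2^(v+2) * (u:Polynomial ℤ)^(t+1+1) * X + 2^(v+3+(t+1)) * (-W) := by
      rw [zsmul_eq_mul, zsmul_eq_mul, hW]
      push_cast
      ring
    rwa [heq] at hmem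

lemma upper_mem (v u : ℕ) (hk : k = 2^v * u) (hk2 : 2 ≤ k) :
    ∃ Q : ℕ, ¬ 2 ∣ Q ∧
      (((2:ℤ)^(v+2) * (u:ℤ)^((k.factorial).factorization 2) * (Q:ℤ))) • (X : Polynomial ℤ)
        ∈ Jgrp k (Polynomial ℤ) := by
  set K := (k.factorial).factorization 2 with hKdef
  have hfac0 : k.factorial ≠ 0 := (Nat.factorial_pos k).ne'
  have hQodd : ¬ 2 ∣ (k.factorial / 2^K) := Nat.not_dvd_ordCompl Nat.prime_two hfac0
  set Q := k.factorial / 2^K with hQdef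
  have hfaceq : 2^K * Q = k.factorial := Nat.ordProj_mul_ordCompl_eq_self k.factorial 2
  have hK1 : 1 ≤ K := by
    rcases Nat.eq_zero_or_pos K with h0 | h1
    · exfalso
      have h2 : 2 ∣ k.factorial := Nat.dvd_factorial (by norm_num) hk2
      rw [← hfaceq, h0, pow_zero, one_mul] at h2
      exact hQodd h2
    · exact h1
  obtain ⟨t, hti⟩ : ∃ t, K = t + 1 := ⟨K-1, by omega⟩
  obtain ⟨w, hw⟩ := iterate v u hk (by omega) t
  have hkmem := factorial_smul_mem (k := k) (by omega) ((2:Polynomial ℤ)^(v+2) * w)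
  have hmem : (Q:ℤ) • ((2:Polynomial ℤ)^(v+2) * (u:Polynomial ℤ)^(t+1) * X
        + (2:Polynomial ℤ)^(v+3+t) * w)
      - (k.factorial : ℤ) • ((2:Polynomial ℤ)^(v+2) * w) ∈ Jgrp k (Polynomial ℤ) :=
    AddSubgroup.sub_mem _ (AddSubgroup.zsmul_mem _ hw _) hkmem
  refine ⟨Q, hQodd, ?_⟩
  have heq : (Q:ℤ) • ((2:Polynomial ℤ)^(v+2) * (u:Polynomial ℤ)^(t+1) * X
        + (2:Polynomial ℤ)^(v+3+t) * w)
      - (k.factorial : ℤ) • ((2:Polynomial ℤ)^(v+2) * w)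
      = (((2:ℤ)^(v+2) * (u:ℤ)^K * (Q:ℤ))) • (X : Polynomial ℤ) := by
    rw [zsmul_eq_mul, zsmul_eq_mul, zsmul_eq_mul]
    have hfq : ((k.factorial : ℤ) : Polynomial ℤ) = 2^K * (Q : Polynomial ℤ) := by
      rw [← hfaceq]; push_cast; ring
    rw [hfq, hti]
    push_cast
    ring
  rwa [heq] at hmem

end JAux


namespace JAux

/-- lower bound: anything in `G(k, ℤ[X])` is divisible by `2^(v+2)`. -/
lemma lower_dvd (k v m : ℕ) (hv : 1 ≤ v) (hm : 1 ≤ m) (hkeq : k = 3 * 2^v * m)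
    {n : ℤ} (hn : n ∈ Ggrp k (Polynomial ℤ)) : (2:ℤ)^(v+2) ∣ n := by
  have hX : n • (X : Polynomial ℤ) ∈ Jgrp k (Polynomial ℤ) := hn X
  have himJ : ∀ f ∈ Jgrp k (Polynomial ℤ),
      (2:ℤ)^(v+2) ∣ ((Polynomial.aeval Eis.ω) f).im := by
    intro f hf
    induction hf using AddSubgroup.closure_induction with
    | mem x hx =>
      obtain ⟨g, rfl⟩ := hx
      rw [map_pow, hkeq]
      exact Eis.key_dvd v m hv hm _
    | zero => simp
    | add x y _ _ ihx ihy =>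
      rw [map_add, Eis.add_im]
      exact dvd_add ihx ihy
    | neg x _ ihx =>
      rw [map_neg, Eis.neg_im]
      exact ihx.neg_right
  have h := himJ _ hX
  rw [map_zsmul, Eis.zsmul_im, Polynomial.aeval_X, Eis.omega_im, mul_one] at h
  exact h

end JAux

/-- If `k` is a positive integer divisible by `6`, then `v₂(m(k)) = v₂(k) + 2`. -/
theorem v2_mval_of_six_dvd (k : ℕ) (hk : 0 < k) (h6 : 6 ∣ k) :
    padicValNat 2 (mval k (Polynomial ℤ)) = padicValNat 2 k + 2 := by
  classical
  set v := padicValNat 2 k with hv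
  have hk0 : k ≠ 0 := hk.ne'
  have h2k : 2 ∣ k := dvd_trans ⟨3, rfl⟩ h6
  have h3k : 3 ∣ k := dvd_trans ⟨2, by norm_num⟩ h6
  have hk6 : 6 ≤ k := Nat.le_of_dvd hk h6
  have hvfac : v = k.factorization 2 := by
    rw [hv, Nat.factorization_def _ Nat.prime_two]
  set u := k / 2^v with hu_def
  have hu : k = 2^v * u := by
    rw [hu_def, hvfac]
    exact (Nat.ordProj_mul_ordCompl_eq_self k 2).symm
  have huodd : ¬ 2 ∣ u := by
    rw [hu_def, hvfac]
    exact Nat.not_dvd_ordCompl Nat.prime_two hk0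
  have hu0 : u ≠ 0 := by
    intro h
    rw [h, mul_zero] at hu
    exact hk0 hu
  have hv1 : 1 ≤ v := by
    rcases Nat.eq_zero_or_pos v with h0 | h1
    · exfalso
      rw [h0, pow_zero, one_mul] at hu
      exact huodd (hu ▸ h2k)
    · exact h1
  -- k = 3 * 2^v * m
  have h32 : 3 * 2^v ∣ k := by
    refine Nat.Coprime.mul_dvd_of_dvd_of_dvd ?_ h3k ?_
    · exact Nat.Coprime.pow_right v (by norm_num)
    · rw [hvfac]; exact Nat.ordProj_dvd k 2
  obtain ⟨m, hm⟩ := h32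
  have hm1 : 1 ≤ m := by
    rcases Nat.eq_zero_or_pos m with h0 | h1
    · exfalso; rw [h0, mul_zero] at hm; exact hk0 hm
    · exact h1
  -- upper bound element
  obtain ⟨Q, hQodd, hupmem⟩ := JAux.upper_mem (k := k) v u hu (by omega)
  set K := (k.factorial).factorization 2 with hK
  set n : ℤ := (2:ℤ)^(v+2) * (u:ℤ)^K * (Q:ℤ) with hn_def
  have hnG : n ∈ Ggrp k (Polynomial ℤ) := by
    intro r
    have h := JAux.comp_mem r hupmem
    simpa [Polynomial.smul_comp, Polynomial.X_comp] using h
  -- generator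
  set g0 : ℤ := Submodule.IsPrincipal.generator (Ggrp k (Polynomial ℤ)) with hg0
  have hg0mem : g0 ∈ Ggrp k (Polynomial ℤ) := Submodule.IsPrincipal.generator_mem _
  have hdvd_n : g0 ∣ n := by
    have hspan : Ideal.span {g0} = Ggrp k (Polynomial ℤ) :=
      Submodule.IsPrincipal.span_singleton_generator _
    rw [← hspan] at hnG
    exact (Ideal.mem_span_singleton).mp hnG
  have h2g0 : (2:ℤ)^(v+2) ∣ g0 := JAux.lower_dvd k v m hv1 hm1 hm hg0mem
  -- numeric facts
  have hQ0 : Q ≠ 0 := by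
    intro h
    exact hQodd (h ▸ ⟨0, rfl⟩)
  have hn0 : n ≠ 0 := by
    rw [hn_def]
    refine mul_ne_zero (mul_ne_zero (pow_ne_zero _ two_ne_zero) (pow_ne_zero _ ?_)) ?_
    · exact_mod_cast Int.natCast_ne_zero.mpr hu0
    · exact_mod_cast Int.natCast_ne_zero.mpr hQ0
  have hg00 : g0 ≠ 0 := by
    intro h
    rw [h] at hdvd_n
    exact hn0 (zero_dvd_iff.mp hdvd_n)
  have hmval : mval k (Polynomial ℤ) = g0.natAbs := rfl
  have hM0 : g0.natAbs ≠ 0 := Int.natAbs_ne_zero.mpr hg00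
  have hMdvd : g0.natAbs ∣ n.natAbs := Int.natAbs_dvd_natAbs.mpr hdvd_n
  have h2M : 2^(v+2) ∣ g0.natAbs := by
    have h := Int.natAbs_dvd_natAbs.mpr h2g0
    simpa [Int.natAbs_pow] using h
  have hnabs : n.natAbs = 2^(v+2) * (u^K * Q) := by
    have : n = ((2^(v+2) * (u^K * Q) : ℕ) : ℤ) := by
      rw [hn_def]; push_cast; ring
    rw [this, Int.natAbs_natCast]
  have hna0 : n.natAbs ≠ 0 := Int.natAbs_ne_zero.mpr hn0
  -- padicValNat computations via factorization
  have hfa_n : (n.natAbs).factorization 2 = v + 2 := by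
    rw [hnabs, Nat.factorization_mul (by positivity) (Nat.mul_ne_zero (pow_ne_zero _ hu0) hQ0)]
    have h1 : ((2:ℕ)^(v+2)).factorization 2 = v + 2 := by
      simp [Nat.Prime.factorization_pow Nat.prime_two, Nat.Prime.factorization_self Nat.prime_two]
    have h2 : (u^K * Q).factorization 2 = 0 := by
      apply Nat.factorization_eq_zero_of_not_dvd
      intro hdvd
      rcases (Nat.Prime.dvd_mul Nat.prime_two).mp hdvd with h | h
      · exact huodd (Nat.Prime.dvd_of_dvd_pow Nat.prime_two h)
      · exact hQodd h
    simp [h1, h2, Nat.Prime.factorization_self Nat.prime_two]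
  have hge : v + 2 ≤ (g0.natAbs).factorization 2 :=
    (Nat.Prime.pow_dvd_iff_le_factorization Nat.prime_two hM0).mp h2M
  have hle : (g0.natAbs).factorization 2 ≤ v + 2 := by
    have hpd : 2 ^ ((g0.natAbs).factorization 2) ∣ n.natAbs :=
      dvd_trans (Nat.ordProj_dvd _ 2) hMdvd
    have := (Nat.Prime.pow_dvd_iff_le_factorization Nat.prime_two hna0).mp hpd
    omega
  have hfinal : (g0.natAbs).factorization 2 = v + 2 := le_antisymm hle hge
  rw [Nat.factorization_def _ Nat.prime_two, ← hmval] at hfinal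
  omega
end

section
/- For every positive integer $k$ and every $f \in J(k, \mathbb{Z}[x])$, the coefficient of $x^1$ in $f$ is divisible by $k$. Consequently $k$ divides $m(k)$. -/
open Polynomial

/- The coefficient of `x` in `f` is the constant term of `f'`, and `(g ^ n)' = n g ^ (n - 1) g'`.
Divisibility of the coefficient of `x` by `k` is preserved under sums and negation, so it
passes from `k`-th powers to all of `J(k, R[x])`; applied to `m • x ∈ J(k, ℤ[x])` for the
generator `m` of `G(k, ℤ[x])` it gives `k ∣ m`. -/

theorem natCast_dvd_coeff_one_pow {R : Type*} [CommRing R] (g : R[X]) (n : ℕ) :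
    (n : R) ∣ (g ^ n).coeff 1 := by
  have h : (g ^ n).coeff 1 = (derivative (g ^ n)).coeff 0 := by
    simp [coeff_derivative]
  rw [h, derivative_pow, mul_assoc, coeff_C_mul]
  exact dvd_mul_right _ _

theorem natCast_dvd_coeff_one_of_mem_Jgrp {R : Type*} [CommRing R] {k : ℕ} {f : R[X]}
    (hf : f ∈ Jgrp k R[X]) : (k : R) ∣ f.coeff 1 := by
  induction hf using AddSubgroup.closure_induction with
  | mem _ hpow => obtain ⟨g, rfl⟩ := hpow; exact natCast_dvd_coeff_one_pow g k
  | zero => simp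
  | add _ _ _ _ hf hg => rw [coeff_add]; exact dvd_add hf hg
  | neg _ _ hf => rw [coeff_neg]; exact hf.neg_right

theorem k_dvd_coeff_one_and_mval_general (k : ℕ) :
    (∀ f ∈ Jgrp k (Polynomial ℤ), (k : ℤ) ∣ f.coeff 1) ∧ k ∣ mval k (Polynomial ℤ) := by
  refine ⟨fun f hf => natCast_dvd_coeff_one_of_mem_Jgrp hf, ?_⟩
  set m := Submodule.IsPrincipal.generator (Ggrp k (Polynomial ℤ))
  have hm : m ∈ Ggrp k ℤ[X] := Submodule.IsPrincipal.generator_mem _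
  have hmX : m • (X : ℤ[X]) ∈ Jgrp k ℤ[X] := hm X
  have hk : (k : ℤ) ∣ m := by
    simpa [coeff_X] using natCast_dvd_coeff_one_of_mem_Jgrp hmX
  exact Int.natCast_dvd.mp hk

/-- For every positive integer `k` and every `f ∈ J(k, ℤ[x])`, the coefficient of `x^1`
in `f` is divisible by `k`; consequently `k ∣ m(k)`. -/
theorem k_dvd_coeff_one_and_mval (k : ℕ) (hk : 0 < k) :
    (∀ f ∈ Jgrp k (Polynomial ℤ), (k : ℤ) ∣ f.coeff 1) ∧ k ∣ mval k (Polynomial ℤ) :=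
  k_dvd_coeff_one_and_mval_general k
end

section
/- For every positive integer $k$, the polynomial $k!\cdot x$ lies in $J(k, \mathbb{Z}[x])$, and consequently $m(k)$ divides $k!$; in particular $m(k) \neq 0$. -/
open Polynomial

noncomputable def deltaOp (f : Polynomial ℤ) : Polynomial ℤ := f.comp (X + 1) - f

lemma wb_lt_iff (a : WithBot ℕ) (m : ℕ) : a < ((m + 1 : ℕ) : WithBot ℕ) ↔ a ≤ (m : ℕ) := by
  cases a with
  | bot => simpa using WithBot.bot_lt_coe (m + 1)
  | coe n =>
    rw [Nat.cast_withBot, Nat.cast_withBot, WithBot.coe_lt_coe, WithBot.coe_le_coe]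
    exact Nat.lt_succ_iff

lemma deltaOp_degree {q : Polynomial ℤ} {m : ℕ} (hq : q.degree < ((m + 1 : ℕ) : WithBot ℕ)) :
    (deltaOp q).degree < ((m : ℕ) : WithBot ℕ) := by
  by_cases h0 : q = 0
  · rw [deltaOp, h0]; simp only [zero_comp, sub_zero, degree_zero]; exact (Nat.cast_withBot m) ▸ WithBot.bot_lt_coe m
  · have hX : (X + 1 : Polynomial ℤ) = X + C 1 := by simp
    have hlc : (q.comp (X + 1)).leadingCoeff = q.leadingCoeff := by
      rw [leadingCoeff_comp (by rw [hX, natDegree_X_add_C]; exact one_ne_zero)]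
      rw [hX, leadingCoeff_X_add_C, one_pow, mul_one]
    have hc0 : q.comp (X + 1) ≠ 0 := fun h => by
      apply h0; rw [← leadingCoeff_eq_zero, ← hlc, h, leadingCoeff_zero]
    have hdc : (q.comp (X + 1)).degree = q.degree := by
      rw [degree_eq_natDegree hc0, degree_eq_natDegree h0, natDegree_comp]
      rw [hX, natDegree_X_add_C, mul_one]
    have hlt : (deltaOp q).degree < q.degree := hdc ▸ degree_sub_lt hdc hc0 hlc
    exact lt_of_lt_of_le hlt ((wb_lt_iff _ _).mp hq)

lemma wb_coe_lt {a b : ℕ} (h : a < b) : ((a : ℕ) : WithBot ℕ) < ((b : ℕ) : WithBot ℕ) := by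
  rw [Nat.cast_withBot, Nat.cast_withBot, WithBot.coe_lt_coe]; exact h

lemma binom_expand : ∀ m : ℕ, 1 ≤ m → ∃ r : Polynomial ℤ,
    r.degree < ((m - 1 : ℕ) : WithBot ℕ) ∧
    (X + 1 : Polynomial ℤ) ^ m = X ^ m + (m : ℤ) • X ^ (m - 1) + r := by
  intro m
  induction m with
  | zero => intro h; omega
  | succ n ih =>
    intro _
    by_cases hn : 1 ≤ n
    · obtain ⟨r, hr, he⟩ := ih hn
      obtain ⟨t, rfl⟩ : ∃ t, n = t + 1 := ⟨n - 1, by omega⟩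
      refine ⟨((t + 1 : ℕ) : ℤ) • X ^ t + r * (X + 1), ?_, ?_⟩
      · simp only [Nat.add_sub_cancel] at hr ⊢
        refine lt_of_le_of_lt (degree_add_le _ _) (max_lt ?_ ?_)
        · refine lt_of_le_of_lt (degree_smul_le _ _) ?_
          rw [degree_X_pow]
          exact wb_coe_lt (Nat.lt_succ_self t)
        · by_cases hr0 : r = 0
          · rw [hr0, zero_mul, degree_zero]
            exact (Nat.cast_withBot (t+1)) ▸ WithBot.bot_lt_coe (t+1)
          · have ht : r.natDegree < t := (natDegree_lt_iff_degree_lt hr0).mpr hr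
            have hd1 : (X + 1 : Polynomial ℤ).degree = 1 := by
              simpa using degree_X_add_C (1 : ℤ)
            rw [degree_mul, degree_eq_natDegree hr0, hd1]
            have : ((r.natDegree : ℕ) : WithBot ℕ) + 1 = ((r.natDegree + 1 : ℕ) : WithBot ℕ) := by
              push_cast; ring
            rw [this]
            exact wb_coe_lt (Nat.succ_lt_succ ht)
      · have hps : (X + 1 : Polynomial ℤ) ^ (t + 1 + 1) = ((X + 1) ^ (t + 1)) * (X + 1) :=
          pow_succ _ _
        rw [hps, he]
        simp only [Nat.add_sub_cancel, zsmul_eq_mul]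
        push_cast
        ring
    · obtain rfl : n = 0 := by omega
      refine ⟨0, ?_, by simp⟩
      exact (Nat.cast_withBot 0) ▸ WithBot.bot_lt_coe 0

lemma deltaOp_add (f g : Polynomial ℤ) : deltaOp (f + g) = deltaOp f + deltaOp g := by
  simp [deltaOp, add_comp]; ring

lemma deltaOp_smul (c : ℤ) (f : Polynomial ℤ) : deltaOp (c • f) = c • deltaOp f := by
  simp [deltaOp, smul_comp, smul_sub]

lemma main_ind (k : ℕ) : ∀ j, j < k → ∃ q : Polynomial ℤ,
    q.degree < ((k - j : ℕ) : WithBot ℕ) ∧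
    deltaOp^[j] (X ^ k : Polynomial ℤ) = ((k.descFactorial j : ℤ)) • X ^ (k - j) + q := by
  intro j
  induction j with
  | zero =>
    intro hj
    refine ⟨0, ?_, by simp⟩
    exact (Nat.cast_withBot (k - 0)) ▸ WithBot.bot_lt_coe _
  | succ j ih =>
    intro hj
    obtain ⟨q, hq, he⟩ := ih (by omega)
    have hm : k - j = (k - (j + 1)) + 1 := by omega
    set m := k - (j + 1) with hmdef
    -- k - j = m + 1, m ≥ 1? we need m+1 ≥ 1 always true
    obtain ⟨r, hrdeg, hre⟩ := binom_expand (m + 1) (by omega)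
    rw [Function.iterate_succ_apply', he, hm]
    rw [deltaOp_add, deltaOp_smul]
    have hdX : deltaOp (X ^ (m + 1)) = ((m + 1 : ℕ) : ℤ) • X ^ m + r := by
      rw [deltaOp]
      have : (X ^ (m + 1) : Polynomial ℤ).comp (X + 1) = (X + 1) ^ (m + 1) := by
        simp [pow_comp]
      rw [this, hre]
      simp only [Nat.add_sub_cancel, zsmul_eq_mul]
      push_cast
      ring
    refine ⟨(k.descFactorial j : ℤ) • r + deltaOp q, ?_, ?_⟩
    · refine lt_of_le_of_lt (degree_add_le _ _) (max_lt ?_ ?_)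
      · exact lt_of_le_of_lt (degree_smul_le _ _) (by simpa using hrdeg)
      · exact deltaOp_degree (by rw [← hm]; exact hq)
    · rw [hdX, Nat.descFactorial_succ, hm]
      simp only [zsmul_eq_mul]
      push_cast
      ring

lemma Jgrp_map {R S : Type*} [CommRing R] [CommRing S] (k : ℕ) (f : R →+* S)
    {x : R} (hx : x ∈ Jgrp k R) : f x ∈ Jgrp k S := by
  induction hx using AddSubgroup.closure_induction with
  | mem r hr => obtain ⟨g, rfl⟩ := hr; exact AddSubgroup.subset_closure ⟨f g, by simp⟩
  | zero => simpa using (Jgrp k S).zero_mem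
  | add a b _ _ ha hb => simpa using (Jgrp k S).add_mem ha hb
  | neg a _ ha => simpa using (Jgrp k S).neg_mem ha

lemma deltaOp_mem (k : ℕ) {f : Polynomial ℤ} (hf : f ∈ Jgrp k (Polynomial ℤ)) :
    deltaOp f ∈ Jgrp k (Polynomial ℤ) := by
  have h1 : f.comp (X + 1) = (eval₂RingHom C (X + 1 : Polynomial ℤ)) f := rfl
  exact AddSubgroup.sub_mem _ (h1 ▸ Jgrp_map k _ hf) hf

lemma deltaOp_iter_mem (k n : ℕ) {f : Polynomial ℤ} (hf : f ∈ Jgrp k (Polynomial ℤ)) :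
    deltaOp^[n] f ∈ Jgrp k (Polynomial ℤ) := by
  induction n with
  | zero => simpa using hf
  | succ n ih => rw [Function.iterate_succ_apply']; exact deltaOp_mem k ih

lemma one_mem_Jgrp (k : ℕ) : (1 : Polynomial ℤ) ∈ Jgrp k (Polynomial ℤ) :=
  AddSubgroup.subset_closure ⟨1, (one_pow k).symm⟩

/-- For every positive integer `k`, `k! • x ∈ J(k, ℤ[x])`, and consequently
`m(k) ∣ k!`; in particular `m(k) ≠ 0`. -/
theorem factorial_smul_X_mem (k : ℕ) (hk : 0 < k) :
    ((Nat.factorial k : ℤ) • (X : Polynomial ℤ) ∈ Jgrp k (Polynomial ℤ)) ∧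
      mval k (Polynomial ℤ) ∣ Nat.factorial k ∧ mval k (Polynomial ℤ) ≠ 0 := by
  -- Step 1: k! • X ∈ Jgrp
  obtain ⟨q, hq, he⟩ := main_ind k (k - 1) (by omega)
  have hk1 : k - (k - 1) = 1 := by omega
  have hdf : (k.descFactorial (k - 1)) = k.factorial := by
    have h1 : k.descFactorial ((k - 1) + 1) = (k - (k - 1)) * k.descFactorial (k - 1) :=
      Nat.descFactorial_succ k (k - 1)
    have h2 : (k - 1) + 1 = k := by omega
    rw [h2, hk1, one_mul, Nat.descFactorial_self] at h1
    exact h1.symm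
  rw [hk1, hdf, pow_one] at he
  have hqc : q = C (q.coeff 0) := by
    apply eq_C_of_degree_le_zero
    rw [hk1] at hq
    exact (wb_lt_iff q.degree 0).mp (by exact_mod_cast hq)
  have hqmem : q ∈ Jgrp k (Polynomial ℤ) := by
    rw [hqc]
    have : C (q.coeff 0) = (q.coeff 0) • (1 : Polynomial ℤ) := by
      rw [zsmul_one]; exact C_eq_intCast _
    rw [this]
    exact AddSubgroup.zsmul_mem _ (one_mem_Jgrp k) _
  have hXk : (X ^ k : Polynomial ℤ) ∈ Jgrp k (Polynomial ℤ) :=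
    AddSubgroup.subset_closure ⟨X, rfl⟩
  have hiter := deltaOp_iter_mem k (k - 1) hXk
  rw [he] at hiter
  have h1 : ((Nat.factorial k : ℤ) • (X : Polynomial ℤ)) ∈ Jgrp k (Polynomial ℤ) := by
    have := AddSubgroup.sub_mem _ hiter hqmem
    simpa using this
  -- Step 2: k! ∈ Ggrp
  have hG : ((Nat.factorial k : ℤ)) ∈ Ggrp k (Polynomial ℤ) := by
    intro r
    have h2 := Jgrp_map k (eval₂RingHom (C : ℤ →+* Polynomial ℤ) r) h1
    rw [map_zsmul, coe_eval₂RingHom, eval₂_X] at h2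
    exact h2
  have hdvd : Submodule.IsPrincipal.generator (Ggrp k (Polynomial ℤ)) ∣ (Nat.factorial k : ℤ) :=
    (Submodule.IsPrincipal.mem_iff_generator_dvd _).mp hG
  have hmd : mval k (Polynomial ℤ) ∣ Nat.factorial k := by
    have h3 := Int.natAbs_dvd_natAbs.mpr hdvd
    rw [Int.natAbs_natCast] at h3
    exact (by rfl : mval k (Polynomial ℤ) = (Submodule.IsPrincipal.generator (Ggrp k (Polynomial ℤ))).natAbs) ▸ h3
  refine ⟨h1, hmd, fun h0 => ?_⟩
  rw [h0] at hmd
  exact Nat.factorial_ne_zero k (Nat.eq_zero_of_zero_dvd hmd)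
end

section
/- Let $p$ be a prime and $k$ a positive integer with $p \mid k$ and $p < k$. Then $v_p(m(k)) \geq v_p(k) + 1$, where $v_p$ denotes the $p$-adic valuation. -/
open Polynomial

open fwdDiff Finset


lemma degree_delta_lt (P : Polynomial ℤ) (n : ℕ) (h : P.degree < (n + 1 : ℕ)) :
    (P.comp (X + 1) - P).degree < (n : ℕ) := by
  rcases le_or_gt P.degree 0 with h0 | h1
  · have : P = C (P.coeff 0) := eq_C_of_degree_le_zero h0
    rw [this, C_comp, sub_self, degree_zero]
    exact WithBot.bot_lt_coe n
  · have hP : P ≠ 0 := by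
      intro h'
      rw [h', degree_zero] at h1
      exact absurd h1 (by simp)
    have hx1 : (X + 1 : Polynomial ℤ) = X + C 1 := by simp
    have hnd : (X + 1 : Polynomial ℤ).natDegree = 1 := by
      rw [hx1]; exact natDegree_X_add_C 1
    have hlc : (P.comp (X + 1)).leadingCoeff = P.leadingCoeff := by
      rw [leadingCoeff_comp (by rw [hnd]; exact one_ne_zero)]
      rw [hx1, (monic_X_add_C (1 : ℤ)).leadingCoeff, one_pow, mul_one]
    have hcomp_ne : P.comp (X + 1) ≠ 0 := by
      rw [← leadingCoeff_ne_zero, hlc, leadingCoeff_ne_zero]; exact hP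
    have hdeg_eq : (P.comp (X + 1)).degree = P.degree := by
      rw [degree_eq_natDegree hcomp_ne, degree_eq_natDegree hP, natDegree_comp, hnd, mul_one]
    have hsub := degree_sub_lt hdeg_eq hcomp_ne hlc
    rw [hdeg_eq] at hsub
    have hle : P.degree ≤ (n : ℕ) := by
      have := (natDegree_lt_iff_degree_lt hP).mpr h
      calc P.degree = (P.natDegree : WithBot ℕ) := degree_eq_natDegree hP
        _ ≤ (n : ℕ) := by exact_mod_cast Nat.lt_succ_iff.mp this
    exact lt_of_lt_of_le hsub hle

lemma fwdDiff_eval_comp (P : Polynomial ℤ) :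
    Δ_[(1:ℕ)] (fun i : ℕ => P.eval (i : ℤ)) = fun i : ℕ => (P.comp (X + 1) - P).eval (i : ℤ) := by
  funext i
  simp only [fwdDiff, eval_sub, eval_comp, eval_add, eval_X, eval_one]
  push_cast
  ring_nf

lemma L1 : ∀ (n : ℕ) (P : Polynomial ℤ), P.degree < (n : ℕ) →
    (Δ_[(1:ℕ)])^[n] (fun i : ℕ => P.eval (i : ℤ)) 0 = 0 := by
  intro n
  induction n with
  | zero =>
    intro P hP
    have : P = 0 := by
      rw [← degree_eq_bot]
      exact Nat.WithBot.lt_zero_iff.mp (by exact_mod_cast hP)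
    simp [this]
  | succ n IH =>
    intro P hP
    rw [Function.iterate_succ_apply, fwdDiff_eval_comp]
    exact IH _ (degree_delta_lt P n hP)

lemma L2 (n : ℕ) : (Δ_[(1:ℕ)])^[n] (fun i : ℕ => (i : ℤ) ^ n) 0 = n.factorial := by
  induction n with
  | zero => simp
  | succ n IH =>
    rw [Function.iterate_succ_apply]
    set R : Polynomial ℤ := (X + 1) ^ (n + 1) - X ^ (n + 1) - (n + 1 : ℤ) • X ^ n with hR
    have hdelta : Δ_[(1:ℕ)] (fun i : ℕ => (i : ℤ) ^ (n + 1)) =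
        ((n + 1 : ℤ)) • (fun i : ℕ => (i : ℤ) ^ n) + fun i : ℕ => R.eval (i : ℤ) := by
      funext i
      simp only [fwdDiff, Pi.add_apply, Pi.smul_apply, smul_eq_mul, hR, eval_sub, eval_smul,
        eval_pow, eval_add, eval_X, eval_one, smul_eq_mul]
      push_cast
      ring
    have hRdeg : R.degree < (n : ℕ) := by
      have hsum : R = ∑ j ∈ range n, (X : Polynomial ℤ) ^ j * ((n+1).choose j : ℤ[X]) := by
        have expand : ((X : Polynomial ℤ) + 1) ^ (n + 1) =
            ∑ j ∈ range (n + 2), X ^ j * 1 ^ (n + 1 - j) * ((n+1).choose j : ℤ[X]) :=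
          add_pow X 1 (n + 1)
        rw [hR, expand, sum_range_succ, sum_range_succ]
        simp [Nat.choose_succ_self_right]
        ring
      rw [hsum]
      refine lt_of_le_of_lt (degree_sum_le _ _) ?_
      refine (Finset.sup_lt_iff (α := WithBot ℕ) (WithBot.bot_lt_coe n)).mpr fun j hj => ?_
      refine lt_of_le_of_lt (degree_mul_le _ _) ?_
      calc degree ((X : Polynomial ℤ) ^ j) + degree ((n+1).choose j : ℤ[X])
          ≤ (j : WithBot ℕ) + 0 := by
            gcongr
            · exact degree_X_pow_le j
            · exact degree_natCast_le _
        _ = (j : WithBot ℕ) := by rw [add_zero]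
        _ < (n : ℕ) := by exact_mod_cast mem_range.mp hj
    rw [hdelta, fwdDiff_iter_add, Pi.add_apply, fwdDiff_iter_const_smul, Pi.smul_apply, IH,
      L1 n R hRdeg, add_zero, smul_eq_mul]
    push_cast [Nat.factorial_succ]
    ring


lemma L1' {n m : ℕ} (h : m < n) : (Δ_[(1:ℕ)])^[n] (fun i : ℕ => (i : ℤ) ^ m) 0 = 0 := by
  have := L1 n (X ^ m) (by rw [degree_X_pow]; exact_mod_cast h)
  simpa using this

lemma Aval (n m : ℕ) :
    ∑ i ∈ range (n + 1), ((-1 : ℤ) ^ (n - i) * (n.choose i)) * (i : ℤ) ^ m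
      = (Δ_[(1:ℕ)])^[n] (fun i : ℕ => (i : ℤ) ^ m) 0 := by
  rw [fwdDiff_iter_eq_sum_shift]
  refine Finset.sum_congr rfl fun i _ => ?_
  simp [zsmul_eq_mul]

lemma key_identity {R : Type*} [CommRing R] (n : ℕ) (r : R) :
    (((n + 1).factorial : ℤ)) • r = ∑ i ∈ range (n + 1),
      ((-1 : ℤ) ^ (n - i) * (n.choose i)) • ((r + (i : R)) ^ (n + 1) - ((i : R)) ^ (n + 1)) := by
  have expand : ∀ i : ℕ, (r + (i : R)) ^ (n + 1) - ((i : R)) ^ (n + 1)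
      = ∑ j ∈ range (n + 1), r ^ (j + 1) * (i : R) ^ (n - j) * ((n + 1).choose (j + 1) : R) := by
    intro i
    rw [add_pow, Finset.sum_range_succ']
    simp [Nat.succ_sub_succ]
  simp only [zsmul_eq_mul, expand, Finset.mul_sum]
  rw [Finset.sum_comm]
  have inner : ∀ j ∈ range (n + 1),
      (∑ i ∈ range (n + 1), ((( -1 : ℤ) ^ (n - i) * (n.choose i) : ℤ) : R) *
        (r ^ (j + 1) * (i : R) ^ (n - j) * ((n + 1).choose (j + 1) : R)))
      = if j = 0 then ((n.factorial : ℤ) : R) * (r * ((n + 1) : R)) else 0 := by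
    intro j hj
    have step : ∀ i ∈ range (n + 1),
        ((( -1 : ℤ) ^ (n - i) * (n.choose i) : ℤ) : R) *
          (r ^ (j + 1) * (i : R) ^ (n - j) * ((n + 1).choose (j + 1) : R))
        = (((( -1 : ℤ) ^ (n - i) * (n.choose i)) * (i : ℤ) ^ (n - j) : ℤ) : R) *
          (r ^ (j + 1) * ((n + 1).choose (j + 1) : R)) := by
      intro i _
      push_cast
      ring
    rw [Finset.sum_congr rfl step, ← Finset.sum_mul, ← Int.cast_sum, Aval]
    rcases Nat.eq_zero_or_pos j with rfl | hjpos
    · rw [if_pos rfl, Nat.sub_zero, L2]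
      simp [Nat.choose_one_right]
    · rw [if_neg (Nat.pos_iff_ne_zero.mp hjpos), L1' ?_, Int.cast_zero, zero_mul]
      have hjn : j ≤ n := Nat.lt_succ_iff.mp (mem_range.mp hj)
      omega
  rw [Finset.sum_congr rfl inner, Finset.sum_ite_eq' (range (n + 1)) 0]
  simp [Nat.factorial_succ]
  ring

lemma mem_Ggrp_iff {k : ℕ} {R : Type*} [CommRing R] {m : ℤ} :
    m ∈ Ggrp k R ↔ ∀ r : R, m • r ∈ Jgrp k R := Iff.rfl

lemma factorial_mem_Ggrp (k : ℕ) (hk : k ≠ 0) (R : Type*) [CommRing R] :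
    (k.factorial : ℤ) ∈ Ggrp k R := by
  obtain ⟨n, rfl⟩ : ∃ n, k = n + 1 := ⟨k - 1, by omega⟩
  rw [mem_Ggrp_iff]
  intro r
  rw [key_identity n r]
  refine AddSubgroup.sum_mem _ fun i _ => AddSubgroup.zsmul_mem _ (AddSubgroup.sub_mem _ ?_ ?_) _
  · exact AddSubgroup.subset_closure ⟨r + i, rfl⟩
  · exact AddSubgroup.subset_closure ⟨(i : R), rfl⟩

-- C1
lemma coeff_one_pow (k : ℕ) (hk : k ≠ 0) (g : Polynomial ℤ) :
    (g ^ k).coeff 1 = (k : ℤ) * (g.coeff 0) ^ (k - 1) * g.coeff 1 := by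
  have h0 : (g ^ k).coeff 1 = (derivative (g ^ k)).coeff 0 := by
    rw [coeff_derivative]; simp
  rw [h0, derivative_pow]
  have : ∀ q : Polynomial ℤ, q.coeff 0 = constantCoeff q := fun q => rfl
  rw [this, map_mul, map_mul, map_pow]
  have hd : constantCoeff (derivative g) = g.coeff 1 := by
    rw [← this, coeff_derivative]; simp
  simp [hd, constantCoeff_apply]

-- C3
lemma fermat_aux (p k : ℕ) (hp : p.Prime) (hpk : p + 1 ≤ k) (c d : ℤ) :
    (p : ℤ) ∣ c ^ (k - p) * d ^ p - c ^ (k - 1) * d := by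
  haveI : Fact p.Prime := ⟨hp⟩
  have h2 := hp.two_le
  rw [← ZMod.intCast_zmod_eq_zero_iff_dvd]
  push_cast
  set C := (c : ZMod p); set D := (d : ZMod p)
  rw [ZMod.pow_card]
  by_cases hC : C = 0
  · rw [hC, zero_pow (by omega : k - p ≠ 0), zero_pow (by omega : k - 1 ≠ 0)]; ring
  · have h1 : C ^ (k - 1) = C ^ (k - p) * C ^ (p - 1) := by
      rw [← pow_add]; congr 1; omega
    rw [h1, ZMod.pow_card_sub_one_eq_one hC]; ring

-- Lucas consequence
lemma not_dvd_B (p k : ℕ) (hp : p.Prime) (hdvd : p ∣ k) (hlt : p < k) :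
    ¬ p ∣ (k - 1).choose (p - 1) := by
  haveI : Fact p.Prime := ⟨hp⟩
  have h2 := hp.two_le
  obtain ⟨t, rfl⟩ := hdvd
  have ht : t ≠ 0 := by rintro rfl; simp at hlt
  obtain ⟨s, rfl⟩ : ∃ s, t = s + 1 := ⟨t - 1, by omega⟩
  have hmod : (p * (s + 1) - 1) % p = p - 1 := by
    have : p * (s + 1) - 1 = p * s + (p - 1) := by rw [Nat.mul_succ]; omega
    rw [this, Nat.mul_add_mod]
    exact Nat.mod_eq_of_lt (by omega)
  have hcong := Choose.choose_modEq_choose_mod_mul_choose_div_nat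
    (p := p) (n := p * (s + 1) - 1) (k := p - 1)
  rw [hmod, Nat.mod_eq_of_lt (by omega : p - 1 < p), Nat.choose_self,
    Nat.div_eq_of_lt (by omega : p - 1 < p), Nat.choose_zero_right, mul_one] at hcong
  intro hdvdB
  have h0 : (p * (s + 1) - 1).choose (p - 1) % p = 0 := Nat.eq_zero_of_dvd_of_lt hdvdB |> fun _ => Nat.mod_eq_zero_of_dvd hdvdB
  rw [Nat.ModEq] at hcong
  rw [h0, Nat.mod_eq_of_lt (by omega : 1 < p)] at hcong
  exact absurd hcong (by omega)

-- C2
lemma coeff_p_pow (p k a : ℕ) (hp : p.Prime) (hlt : p < k)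
    (ha : ∀ i, 1 ≤ i → i < p → p ^ a ∣ k.choose i) (g : Polynomial ℤ) :
    ((p : ℤ)) ^ a ∣ (g ^ k).coeff p -
      (k.choose p : ℤ) * (g.coeff 0) ^ (k - p) * (g.coeff 1) ^ p := by
  have h2 := hp.two_le
  set c := g.coeff 0 with hc
  set h := g.divX with hhd
  have hg : h * X + C c = g := divX_mul_X_add g
  have hexp : g ^ k = ∑ i ∈ range (k + 1), (h * X) ^ i * (C c) ^ (k - i) * (k.choose i : Polynomial ℤ) := by
    rw [← hg]; exact add_pow _ _ _
  have hcoeff : ∀ i, ((h * X) ^ i * (C c) ^ (k - i) * (k.choose i : Polynomial ℤ)).coeff p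
      = (if i ≤ p then (h ^ i).coeff (p - i) else 0) * (c ^ (k - i) * (k.choose i : ℤ)) := by
    intro i
    rw [mul_pow, ← C_pow, ← C_eq_natCast, coeff_mul_C, coeff_mul_C, coeff_mul_X_pow', mul_assoc]
  rw [hexp, finset_sum_coeff]
  rw [Finset.sum_congr rfl fun i _ => hcoeff i]
  have hpmem : p ∈ range (k + 1) := mem_range.mpr (by omega)
  rw [← Finset.sum_erase_add _ _ hpmem]
  have hterm : (if p ≤ p then (h ^ p).coeff (p - p) else 0) * (c ^ (k - p) * (k.choose p : ℤ))
      = (k.choose p : ℤ) * c ^ (k - p) * (g.coeff 1) ^ p := by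
    rw [if_pos le_rfl, Nat.sub_self]
    have h1 : (h ^ p).coeff 0 = (g.coeff 1) ^ p := by
      have h0 : (h ^ p).coeff 0 = (h.coeff 0) ^ p := by
        simpa [constantCoeff_apply] using map_pow (constantCoeff (R := ℤ)) h p
      rw [h0, hhd, coeff_divX]
    rw [h1]; ring
  rw [hterm, add_sub_cancel_right]
  refine Finset.dvd_sum fun i hi => ?_
  have hip : i ≠ p := (Finset.mem_erase.mp hi).1
  by_cases hle : i ≤ p
  · rcases Nat.eq_zero_or_pos i with rfl | hipos
    · rw [if_pos hle]
      simp only [pow_zero, coeff_one, Nat.sub_zero]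
      rw [if_neg (by omega : ¬ p = 0), zero_mul]
      exact dvd_zero _
    · have hdc : ((p : ℤ)) ^ a ∣ (k.choose i : ℤ) := by
        have := ha i hipos (lt_of_le_of_ne hle hip)
        exact_mod_cast Int.natCast_dvd_natCast.mpr this
      exact Dvd.dvd.mul_left (hdc.mul_left _) _
  · rw [if_neg hle, zero_mul]; exact dvd_zero _

lemma core_dvd (p k b q B : ℕ) (hp : p.Prime) (hlt : p < k)
    (hCkp : (k.choose p : ℤ) = (p : ℤ) ^ b * q * B)
    (hCki : ∀ i, 1 ≤ i → i < p → p ^ (b + 1) ∣ k.choose i)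
    (g : Polynomial ℤ) :
    ((k : ℤ) * (p : ℤ) ^ (b + 1)) ∣
      ((p : ℤ) ^ b * q * B * (g ^ k).coeff 1 - (k : ℤ) * (g ^ k).coeff p) := by
  have h2 := hp.two_le
  set c := g.coeff 0
  set d := g.coeff 1
  have hc1 : (g ^ k).coeff 1 = (k : ℤ) * c ^ (k - 1) * d :=
    coeff_one_pow k (by omega) g
  obtain ⟨E, hE⟩ := coeff_p_pow p k (b + 1) hp hlt hCki g
  obtain ⟨F, hF⟩ := fermat_aux p k hp (by omega) c d
  have hcoeffp : (g ^ k).coeff p = (k.choose p : ℤ) * c ^ (k - p) * d ^ p + (p : ℤ) ^ (b + 1) * E := by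
    linarith [hE]
  have hFd : c ^ (k - p) * d ^ p = c ^ (k - 1) * d + (p : ℤ) * F := by linarith [hF]
  refine ⟨-((q : ℤ) * B * F) - E, ?_⟩
  rw [hc1, hcoeffp, hCkp]
  linear_combination (-(k : ℤ) * (p : ℤ) ^ b * q * B) * hF

lemma dvd_L_of_mem_J (p k b q B : ℕ) (hp : p.Prime) (hlt : p < k)
    (hCkp : (k.choose p : ℤ) = (p : ℤ) ^ b * q * B)
    (hCki : ∀ i, 1 ≤ i → i < p → p ^ (b + 1) ∣ k.choose i)
    (u : Polynomial ℤ) (hu : u ∈ Jgrp k (Polynomial ℤ)) :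
    ((k : ℤ) * (p : ℤ) ^ (b + 1)) ∣
      ((p : ℤ) ^ b * q * B * u.coeff 1 - (k : ℤ) * u.coeff p) := by
  induction hu using AddSubgroup.closure_induction with
  | mem x hx =>
    obtain ⟨g, rfl⟩ := hx
    exact core_dvd p k b q B hp hlt hCkp hCki g
  | zero => simp
  | add x y hx hy ihx ihy =>
    have : (p : ℤ) ^ b * q * B * (x + y).coeff 1 - (k : ℤ) * (x + y).coeff p
        = ((p : ℤ) ^ b * q * B * x.coeff 1 - (k : ℤ) * x.coeff p)
          + ((p : ℤ) ^ b * q * B * y.coeff 1 - (k : ℤ) * y.coeff p) := by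
      simp only [coeff_add]; ring
    rw [this]; exact dvd_add ihx ihy
  | neg x hx ihx =>
    have : (p : ℤ) ^ b * q * B * (-x).coeff 1 - (k : ℤ) * (-x).coeff p
        = -((p : ℤ) ^ b * q * B * x.coeff 1 - (k : ℤ) * x.coeff p) := by
      simp only [coeff_neg]; ring
    rw [this]; exact dvd_neg.mpr ihx

/-- For a prime `p` and a positive integer `k` with `p ∣ k` and `p < k`,
we have `v_p(m(k)) ≥ v_p(k) + 1`. -/
theorem v_p_mval_ge (p k : ℕ) (hp : p.Prime) (hdvd : p ∣ k) (hlt : p < k) :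
    padicValNat p (mval k (Polynomial ℤ)) ≥ padicValNat p k + 1 := by
  haveI : Fact p.Prime := ⟨hp⟩
  have h2 := hp.two_le
  have hk0 : k ≠ 0 := by omega
  set a := padicValNat p k with ha
  have ha1 : 1 ≤ a := one_le_padicValNat_of_dvd (by omega) hdvd
  obtain ⟨b, hb⟩ : ∃ b, a = b + 1 := ⟨a - 1, by omega⟩
  have hka : p ^ a ∣ k := pow_padicValNat_dvd
  set q := k / p ^ a with hq'
  have hkq : k = p ^ a * q := (Nat.mul_div_cancel' hka).symm
  have hq0 : q ≠ 0 := by intro h0; rw [h0, Nat.mul_zero] at hkq; exact hk0 hkq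
  set B := (k - 1).choose (p - 1) with hB'
  have hBnd : ¬ p ∣ B := not_dvd_B p k hp hdvd hlt
  have hchoose : ∀ i, 1 ≤ i → k * (k - 1).choose (i - 1) = k.choose i * i := by
    intro i hi
    obtain ⟨n, hn⟩ : ∃ n, k = n + 1 := ⟨k - 1, by omega⟩
    obtain ⟨j, hj⟩ : ∃ j, i = j + 1 := ⟨i - 1, by omega⟩
    subst hn hj
    simpa using Nat.add_one_mul_choose_eq n j
  have hCki : ∀ i, 1 ≤ i → i < p → p ^ (b + 1) ∣ k.choose i := by
    intro i h1 h2'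
    have hdd : p ^ (b + 1) ∣ k.choose i * i := by
      rw [← hchoose i h1, ← hb]
      exact Dvd.dvd.mul_right hka _
    have hcop : Nat.Coprime (p ^ (b + 1)) i :=
      Nat.Coprime.pow_left _ ((Nat.Prime.coprime_iff_not_dvd hp).mpr
        (fun hpi => absurd (Nat.le_of_dvd (by omega) hpi) (by omega)))
    exact hcop.dvd_of_dvd_mul_right hdd
  have hCkp : (k.choose p : ℤ) = (p : ℤ) ^ b * q * B := by
    have hnat : k.choose p * p = (p ^ b * q * B) * p := by
      have h' := hchoose p (by omega)
      rw [← hB'] at h'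
      rw [← h', hkq, hb]
      ring
    have hc := Nat.eq_of_mul_eq_mul_right (by omega : 0 < p) hnat
    exact_mod_cast congrArg (Nat.cast (R := ℤ)) hc
  suffices H : ∀ m : ℤ, m ∈ Ggrp k (Polynomial ℤ) → m ∣ (k.factorial : ℤ) →
      a + 1 ≤ padicValNat p m.natAbs by
    exact H (Submodule.IsPrincipal.generator ((Ggrp k (Polynomial ℤ)) : Ideal ℤ))
      (Submodule.IsPrincipal.generator_mem _)
      ((Submodule.IsPrincipal.mem_iff_generator_dvd _).mp (factorial_mem_Ggrp k hk0 _))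
  intro m hmem hfac
  have hmx : m • (X : Polynomial ℤ) ∈ Jgrp k (Polynomial ℤ) := mem_Ggrp_iff.mp hmem X
  have hdl := dvd_L_of_mem_J p k b q B hp hlt hCkp hCki (m • X) hmx
  have hcoeff1 : (m • (X : Polynomial ℤ)).coeff 1 = m := by
    simp [coeff_smul]
  have hcoeffp : (m • (X : Polynomial ℤ)).coeff p = 0 := by
    simp [coeff_smul, coeff_X, show ¬(1 = p) by omega, show ¬(p = 1) by omega]
  rw [hcoeff1, hcoeffp, mul_zero, sub_zero] at hdl
  obtain ⟨w, hw⟩ := hdl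
  have hkZ : (k : ℤ) = (p : ℤ) ^ (b + 1) * q := by
    have : k = p ^ (b + 1) * q := by rw [← hb]; exact hkq
    exact_mod_cast congrArg (Nat.cast (R := ℤ)) this
  have hmB : (B : ℤ) * m = (p : ℤ) ^ (b + 2) * w := by
    have hpb : ((p : ℤ)) ^ b ≠ 0 := pow_ne_zero _ (by exact_mod_cast (by omega : p ≠ 0))
    have hq0' : (q : ℤ) ≠ 0 := by exact_mod_cast hq0
    apply mul_left_cancel₀ hq0'
    apply mul_left_cancel₀ hpb
    calc (p : ℤ) ^ b * ((q : ℤ) * ((B : ℤ) * m)) = (p : ℤ) ^ b * q * B * m := by ring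
      _ = (k : ℤ) * (p : ℤ) ^ (b + 1) * w := hw
      _ = (p : ℤ) ^ b * ((q : ℤ) * ((p : ℤ) ^ (b + 2) * w)) := by rw [hkZ]; ring
  have hdvdZ : ((p : ℤ)) ^ (b + 2) ∣ (B : ℤ) * m := ⟨w, hmB⟩
  have hdvdN : p ^ (b + 2) ∣ B * m.natAbs := by
    have h := Int.natAbs_dvd_natAbs.mpr hdvdZ
    rwa [Int.natAbs_mul, Int.natAbs_pow, Int.natAbs_natCast, Int.natAbs_natCast] at h
  have hcop : Nat.Coprime (p ^ (b + 2)) B :=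
    Nat.Coprime.pow_left _ ((Nat.Prime.coprime_iff_not_dvd hp).mpr hBnd)
  have hdvdm : p ^ (b + 2) ∣ m.natAbs := hcop.dvd_of_dvd_mul_left hdvdN
  have hm0 : m ≠ 0 := by
    rintro h0
    rw [h0] at hfac
    have := zero_dvd_iff.mp hfac
    exact absurd (by exact_mod_cast this) (Nat.factorial_ne_zero k)
  have hn0 : m.natAbs ≠ 0 := Int.natAbs_ne_zero.mpr hm0
  have hfin := (padicValNat_dvd_iff_le hn0).mp hdvdm
  omega
end

section
/- For every nonnegative integer $s$, every element of $J(6 \cdot 2^s, \mathbb{Z}[x]/(x^2+x+1))$ is equal to the residue class of $a + 2^{s+3}\, b\, x$ for some integers $a, b$. -/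
open Polynomial

noncomputable abbrev Ieis : Ideal (Polynomial ℤ) := Ideal.span {(X ^ 2 + X + 1 : Polynomial ℤ)}

noncomputable abbrev πe := Ideal.Quotient.mk Ieis

lemma mul_law (p q r t : ℤ) :
    πe (C p + C q * X) * πe (C r + C t * X)
      = πe (C (p*r - q*t) + C (p*t + q*r - q*t) * X) := by
  rw [← map_mul, Ideal.Quotient.eq]
  apply Ideal.mem_span_singleton.2
  exact ⟨C (q*t), by simp only [map_sub, map_add, map_mul]; ring⟩

lemma dvd8 (p q : ℤ) :
    (8:ℤ) ∣ ((p * p - q * q) * p - (p * q + q * p - q * q) * q) *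
        ((p * p - q * q) * q + (p * q + q * p - q * q) * p - (p * q + q * p - q * q) * q)
        + ((p * p - q * q) * q + (p * q + q * p - q * q) * p - (p * q + q * p - q * q) * q) *
          ((p * p - q * q) * p - (p * q + q * p - q * q) * q)
        - ((p * p - q * q) * q + (p * q + q * p - q * q) * p - (p * q + q * p - q * q) * q) *
          ((p * p - q * q) * q + (p * q + q * p - q * q) * p - (p * q + q * p - q * q) * q) := by
  have h : ∀ a b : ZMod 8, ((a * a - b * b) * a - (a * b + b * a - b * b) * b) *
        ((a * a - b * b) * b + (a * b + b * a - b * b) * a - (a * b + b * a - b * b) * b)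
        + ((a * a - b * b) * b + (a * b + b * a - b * b) * a - (a * b + b * a - b * b) * b) *
          ((a * a - b * b) * a - (a * b + b * a - b * b) * b)
        - ((a * a - b * b) * b + (a * b + b * a - b * b) * a - (a * b + b * a - b * b) * b) *
          ((a * a - b * b) * b + (a * b + b * a - b * b) * a - (a * b + b * a - b * b) * b) = 0 := by
    decide
  rw [show (8:ℤ) = ((8:ℕ):ℤ) by norm_num, ← ZMod.intCast_zmod_eq_zero_iff_dvd]
  push_cast
  exact h p q

lemma pow6 (p q : ℤ) : ∃ a b : ℤ,
    (πe (C p + C q * X)) ^ 6 = πe (C a + C (8 * b) * X) := by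
  have e2 : (πe (C p + C q * X)) ^ 2 = πe (C (p*p - q*q) + C (p*q + q*p - q*q) * X) := by
    rw [sq]; exact mul_law p q p q
  set u1 := p*p - q*q with hu1
  set v1 := p*q + q*p - q*q with hv1
  have e3 : (πe (C p + C q * X)) ^ 3 = πe (C (u1*p - v1*q) + C (u1*q + v1*p - v1*q) * X) := by
    rw [pow_succ, e2]; exact mul_law u1 v1 p q
  set u2 := u1*p - v1*q with hu2
  set v2 := u1*q + v1*p - v1*q with hv2
  have e6 : (πe (C p + C q * X)) ^ 6
      = πe (C (u2*u2 - v2*v2) + C (u2*v2 + v2*u2 - v2*v2) * X) := by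
    have : (6:ℕ) = 3 * 2 := rfl
    rw [this, pow_mul, sq, e3]; exact mul_law u2 v2 u2 v2
  obtain ⟨b, hb⟩ := dvd8 p q
  refine ⟨u2*u2 - v2*v2, b, ?_⟩
  rw [e6]
  congr 2
  rw [← hb, hu2, hv2, hu1, hv1]

lemma pow_main (s : ℕ) (p q : ℤ) : ∃ a b : ℤ,
    (πe (C p + C q * X)) ^ (6 * 2 ^ s) = πe (C a + C (2 ^ (s+3) * b) * X) := by
  induction s with
  | zero =>
    obtain ⟨a, b, h⟩ := pow6 p q
    exact ⟨a, b, by simpa using h⟩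
  | succ n ih =>
    obtain ⟨a, b, h⟩ := ih
    have e : (πe (C p + C q * X)) ^ (6 * 2 ^ (n+1))
        = ((πe (C p + C q * X)) ^ (6 * 2 ^ n)) ^ 2 := by
      rw [← pow_mul]; ring_nf
    rw [e, h, sq, mul_law]
    refine ⟨a * a - 2^(n+3)*b * (2^(n+3)*b), a*b - 2^(n+2)*(b*b), ?_⟩
    congr 2
    ring

lemma monic_eis : (X ^ 2 + X + 1 : Polynomial ℤ).Monic := by
  have h1 : (X ^ 2 + X + 1 : Polynomial ℤ) = X ^ 2 + (X + 1) := by ring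
  rw [h1]
  apply monic_X_pow_add
  have : (X + 1 : Polynomial ℤ).degree = 1 := by
    simpa using degree_X_add_C (1:ℤ)
  rw [this]; norm_num

lemma surj_eis (z : Polynomial ℤ ⧸ Ieis) : ∃ p q : ℤ, z = πe (C p + C q * X) := by
  obtain ⟨g, rfl⟩ := Ideal.Quotient.mk_surjective z
  set r := g %ₘ (X ^ 2 + X + 1) with hr
  have key : πe g = πe r := by
    rw [Ideal.Quotient.eq]
    apply Ideal.mem_span_singleton.2
    refine ⟨g /ₘ (X ^ 2 + X + 1), ?_⟩
    have := modByMonic_add_div g (X ^ 2 + X + 1)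
    rw [hr]
    linear_combination -this
  have hdeg : r.degree ≤ 1 := by
    have h2 : (X ^ 2 + X + 1 : Polynomial ℤ).degree = 2 := by compute_degree!
    have h3 := degree_modByMonic_lt g monic_eis
    rw [h2] at h3
    exact Order.le_of_lt_succ h3
  refine ⟨r.coeff 0, r.coeff 1, ?_⟩
  rw [key]
  nth_rewrite 1 [eq_X_add_C_of_degree_le_one hdeg]
  exact congrArg πe (add_comm _ _)

/-- For every nonnegative integer `s`, every element of
`J(6·2^s, ℤ[x]/(x²+x+1))` is the residue class of `a + 2^(s+3)·b·x` for some `a b : ℤ`. -/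
theorem Jgrp_quot_sub (s : ℕ) :
    ∀ f ∈ Jgrp (6 * 2 ^ s) (Polynomial ℤ ⧸ Ideal.span {(X ^ 2 + X + 1 : Polynomial ℤ)}),
      ∃ a b : ℤ, f = Ideal.Quotient.mk (Ideal.span {(X ^ 2 + X + 1 : Polynomial ℤ)})
        (C a + C (2 ^ (s + 3) * b) * X) := by
  intro f hf
  let S : AddSubgroup (Polynomial ℤ ⧸ Ieis) :=
    { carrier := {z | ∃ a b : ℤ, z = πe (C a + C (2 ^ (s + 3) * b) * X)}
      zero_mem' := ⟨0, 0, by simp⟩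
      add_mem' := by
        rintro x y ⟨a1, b1, rfl⟩ ⟨a2, b2, rfl⟩
        refine ⟨a1 + a2, b1 + b2, ?_⟩
        rw [← map_add]
        exact congrArg πe (by simp only [map_add, map_mul]; ring)
      neg_mem' := by
        rintro x ⟨a1, b1, rfl⟩
        refine ⟨-a1, -b1, ?_⟩
        rw [← map_neg]
        exact congrArg πe (by simp only [map_neg, map_mul, map_add]; ring) }
  have hsub : {r : Polynomial ℤ ⧸ Ieis | ∃ g, r = g ^ (6 * 2 ^ s)} ⊆ S := by
    rintro r ⟨z, rfl⟩
    obtain ⟨p, q, rfl⟩ := surj_eis z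
    obtain ⟨a, b, h⟩ := pow_main s p q
    exact ⟨a, b, h⟩
  exact (AddSubgroup.closure_le S).2 hsub hf
end

section
/- For every nonnegative integer $s$, $2^{s+3}$ divides $m(6 \cdot 2^s, \mathbb{Z}[x]/(x^2+x+1))$. -/
open Polynomial

noncomputable abbrev fpoly : Polynomial ℤ := X ^ 2 + X + 1
noncomputable abbrev Rng := AdjoinRoot fpoly
noncomputable abbrev ξ : Rng := AdjoinRoot.root fpoly

lemma fpoly_monic : fpoly.Monic := by
  unfold fpoly; rw [add_assoc]
  exact (monic_X_pow 2).add_of_left (by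
    apply lt_of_le_of_lt (degree_add_le _ _) ?_
    simp [degree_X_pow])

lemma fpoly_natDegree : fpoly.natDegree = 2 := by unfold fpoly; compute_degree!

lemma hrel : ξ ^ 2 + ξ + 1 = 0 := by
  have := AdjoinRoot.mk_self (f := fpoly)
  simpa [fpoly, map_add, map_pow] using this

/-- Every element of `ℤ[ω]` has the form `a + b ω`. -/
lemma exists_rep (g : Rng) : ∃ a b : ℤ, g = (a : Rng) + b * ξ := by
  let S : Subalgebra ℤ Rng :=
  { carrier := {r | ∃ a b : ℤ, r = (a : Rng) + b * ξ}
    add_mem' := by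
      rintro x y ⟨a, b, rfl⟩ ⟨c, d, rfl⟩
      exact ⟨a + c, b + d, by push_cast; ring⟩
    mul_mem' := by
      rintro x y ⟨a, b, rfl⟩ ⟨c, d, rfl⟩
      refine ⟨a * c - b * d, a * d + b * c - b * d, ?_⟩
      push_cast
      linear_combination (b * d : Rng) * hrel
    algebraMap_mem' := fun c => ⟨c, 0, by simp⟩ }
  have hξ : ξ ∈ S := ⟨0, 1, by push_cast; ring⟩
  have hle : Algebra.adjoin ℤ {ξ} ≤ S := Algebra.adjoin_le (by simpa using hξ)
  have htop : Algebra.adjoin ℤ ({ξ} : Set Rng) = ⊤ := AdjoinRoot.adjoinRoot_eq_top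
  exact hle (htop ▸ Algebra.mem_top)

/-- `1, ω` are linearly independent over `ℤ`. -/
lemma rep_zero {a b : ℤ} (h : (a : Rng) + b * ξ = 0) : a = 0 ∧ b = 0 := by
  let pb := AdjoinRoot.powerBasis' fpoly_monic
  have hdim : pb.dim = 2 := by
    show fpoly.natDegree = 2
    exact fpoly_natDegree
  let B := pb.basis.reindex (finCongr hdim)
  have hB : ∀ i : Fin 2, B i = ξ ^ (i : ℕ) := by
    intro i
    simp only [B, Module.Basis.reindex_apply, PowerBasis.coe_basis]
    have hg : pb.gen = ξ := AdjoinRoot.powerBasis'_gen fpoly_monic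
    rw [hg]
    congr 1
  have hli := B.linearIndependent
  rw [Fintype.linearIndependent_iff] at hli
  have := hli ![a, b] (by
    rw [Fin.sum_univ_two]
    simpa [hB, zsmul_eq_mul] using h)
  exact ⟨this 0, this 1⟩

lemma rep_unique {a b a' b' : ℤ} (h : (a : Rng) + b * ξ = (a' : Rng) + b' * ξ) :
    a = a' ∧ b = b' := by
  have h0 : ((a - a' : ℤ) : Rng) + (b - b' : ℤ) * ξ = 0 := by
    push_cast
    linear_combination h
  obtain ⟨h1, h2⟩ := rep_zero h0
  omega

lemma dvd_of_zmod2 (n : ℤ) (h : (n : ZMod 2) = 0) : (2:ℤ) ∣ n :=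
  (ZMod.intCast_zmod_eq_zero_iff_dvd n 2).mp h

lemma cube_lemma (a b : ℤ) (hab : ¬ ((a : ZMod 2) = 0 ∧ (b : ZMod 2) = 0)) :
    ∃ u v : ℤ, ((a : Rng) + b * ξ) ^ 3 = 1 + 2 * ((u : Rng) + v * ξ) := by
  obtain ⟨u, hu⟩ : (2:ℤ) ∣ (a^3 + b^3 - 3*a*b^2 - 1) := by
    apply dvd_of_zmod2
    push_cast
    generalize (a : ZMod 2) = A at *
    generalize (b : ZMod 2) = B at *
    revert hab; revert A B; decide
  obtain ⟨v, hv⟩ : (2:ℤ) ∣ (3*a^2*b - 3*a*b^2) := by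
    apply dvd_of_zmod2
    push_cast
    generalize (a : ZMod 2) = A
    generalize (b : ZMod 2) = B
    revert A B; decide
  refine ⟨u, v, ?_⟩
  have hu' : (a : Rng)^3 + b^3 - 3*a*b^2 - 1 = 2*u := by
    exact_mod_cast congrArg (Int.cast : ℤ → Rng) hu
  have hv' : (3*(a:Rng)^2*b - 3*a*b^2) = 2*v := by
    exact_mod_cast congrArg (Int.cast : ℤ → Rng) hv
  linear_combination (3*(a:Rng)*b^2 + b^3*(ξ - 1)) * hrel + hu' + ξ * hv'

lemma sixth_lemma (u v : ℤ) (x : Rng) (h : x = 1 + 2 * ((u : Rng) + v * ξ)) :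
    ∃ c : ℤ, ∃ t : Rng, x ^ 2 = 1 + 2^2 * (c : Rng) + 2^3 * t := by
  obtain ⟨w, hw⟩ : (2:ℤ) ∣ (2*u*v + v - v^2) := by
    apply dvd_of_zmod2
    push_cast
    generalize (u : ZMod 2) = U
    generalize (v : ZMod 2) = V
    revert U V; decide
  refine ⟨u^2 + u - v^2, (w : Rng) * ξ, ?_⟩
  have hw' : (2*(u:Rng)*v + v - v^2) = 2*w := by
    exact_mod_cast congrArg (Int.cast : ℤ → Rng) hw
  subst h
  push_cast
  linear_combination (4*(v:Rng)^2) * hrel + (4*ξ) * hw'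

lemma sq_step (j : ℕ) (x : Rng) (c : ℤ) (t : Rng)
    (h : x = 1 + 2^(j+2) * (c : Rng) + 2^(j+3) * t) :
    x ^ 2 = 1 + 2^(j+3) * (c : Rng) + 2^(j+4) * (t + 2^j * ((c : Rng) + 2*t)^2) := by
  subst h; ring

lemma iter_lemma (s : ℕ) (x : Rng) (c : ℤ) (t : Rng) (h : x = 1 + 2^2 * (c : Rng) + 2^3 * t) :
    ∃ t' : Rng, x ^ (2^s) = 1 + 2^(s+2) * (c : Rng) + 2^(s+3) * t' := by
  induction s with
  | zero => exact ⟨t, by simpa using h⟩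
  | succ n ih =>
    obtain ⟨t', ht'⟩ := ih
    refine ⟨t' + 2^n * ((c : Rng) + 2*t')^2, ?_⟩
    rw [pow_succ, pow_mul]
    exact sq_step n (x^(2^n)) c t' ht'

/-- Key lemma: every `(6·2^s)`-th power in `ℤ[ω]` is an integer mod `2^(s+3)`. -/
lemma key_lemma (s : ℕ) (g : Rng) :
    ∃ c : ℤ, ∃ t : Rng, g ^ (6 * 2^s) = (c : Rng) + 2^(s+3) * t := by
  obtain ⟨a, b, rfl⟩ := exists_rep g
  by_cases hab : (a : ZMod 2) = 0 ∧ (b : ZMod 2) = 0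
  · -- both even : g ∈ 2·ℤ[ω], and 6·2^s ≥ s+3
    obtain ⟨a', ha⟩ := (ZMod.intCast_zmod_eq_zero_iff_dvd a 2).mp hab.1
    obtain ⟨b', hb⟩ := (ZMod.intCast_zmod_eq_zero_iff_dvd b 2).mp hab.2
    have hk : 6 * 2^s = (s+3) + (6 * 2^s - (s+3)) := by
      have hs : s < 2^s := (Nat.lt_two_pow_self (n := s))
      omega
    refine ⟨0, 2^(6 * 2^s - (s+3)) * ((a' : Rng) + b' * ξ)^(6 * 2^s), ?_⟩
    have hg : (a : Rng) + b * ξ = 2 * ((a' : Rng) + b' * ξ) := by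
      rw [ha, hb]; push_cast; ring
    rw [hg, mul_pow, Int.cast_zero, zero_add, ← mul_assoc, ← pow_add, ← hk]
  · -- unit case
    obtain ⟨u, v, h3⟩ := cube_lemma a b hab
    obtain ⟨c, t, h6⟩ := sixth_lemma u v _ h3
    rw [← pow_mul] at h6
    obtain ⟨t', ht'⟩ := iter_lemma s _ c t h6
    rw [← pow_mul] at ht'
    refine ⟨1 + 2^(s+2) * c, t', ?_⟩
    have harith : 3 * 2 * 2^s = 6 * 2^s := by ring
    rw [harith] at ht'
    rw [ht']
    push_cast
    ring

/-- Main divisibility: any integer in `G(6·2^s, ℤ[ω])` is divisible by `2^(s+3)`. -/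
lemma dvd_main (s : ℕ) (m : ℤ) (hm : ∀ r : Rng, m • r ∈ Jgrp (6 * 2^s) Rng) :
    (2:ℤ)^(s+3) ∣ m := by
  let T : AddSubgroup Rng :=
  { carrier := {r | ∃ c : ℤ, ∃ t : Rng, r = (c : Rng) + 2^(s+3) * t}
    add_mem' := by
      rintro x y ⟨c, t, rfl⟩ ⟨c', t', rfl⟩
      exact ⟨c + c', t + t', by push_cast; ring⟩
    zero_mem' := ⟨0, 0, by simp⟩
    neg_mem' := by
      rintro x ⟨c, t, rfl⟩
      exact ⟨-c, -t, by push_cast; ring⟩ }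
  have hle : Jgrp (6 * 2^s) Rng ≤ T := by
    apply AddSubgroup.closure_le T |>.mpr
    rintro r ⟨g, rfl⟩
    exact key_lemma s g
  obtain ⟨c, t, hct⟩ := hle (hm ξ)
  obtain ⟨u, v, rfl⟩ := exists_rep t
  have heq : ((0:ℤ) : Rng) + m * ξ = ((c + 2^(s+3) * u : ℤ) : Rng) + ((2^(s+3) * v : ℤ) : Rng) * ξ := by
    rw [zsmul_eq_mul] at hct
    push_cast
    linear_combination hct
  obtain ⟨-, h2⟩ := rep_unique heq
  exact ⟨v, h2⟩

/-- For every nonnegative integer `s`, `2^(s+3)` divides `m(6·2^s, ℤ[x]/(x²+x+1))`. -/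
theorem pow_dvd_mval_quot (s : ℕ) :
    2 ^ (s + 3) ∣ mval (6 * 2 ^ s) (Polynomial ℤ ⧸ Ideal.span {(X ^ 2 + X + 1 : Polynomial ℤ)}) := by
  have hmem : Submodule.IsPrincipal.generator (Ggrp (6 * 2^s) Rng) ∈ Ggrp (6 * 2^s) Rng :=
    Submodule.IsPrincipal.generator_mem _
  have hdvd : (2:ℤ)^(s+3) ∣ Submodule.IsPrincipal.generator (Ggrp (6 * 2^s) Rng) :=
    dvd_main s _ hmem
  have : ((2:ℤ)^(s+3)).natAbs ∣ (Submodule.IsPrincipal.generator (Ggrp (6 * 2^s) Rng)).natAbs :=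
    Int.natAbs_dvd_natAbs.mpr hdvd
  simp [Int.natAbs_pow] at this
  exact this
end

section
/- Let $k$ be an even positive integer with $n = v_2(k)$. Then for all polynomials $g, h \in \mathbb{Z}[x]$, every coefficient of the polynomial $g^k(1+2h)^k - g^k - 2^{n+1}\, g^k(h+h^2)$ is divisible by $2^{n+2}$. -/
open Polynomial

lemma one_add_pow_aux {R : Type*} [CommRing R] (a : R) (t : ℕ) :
    ∃ w : R, (1 + a) ^ t = 1 + a * w := by
  have h : a ∣ (1 + a) ^ t - 1 ^ t := by
    simpa using sub_dvd_pow_sub_pow (1 + a) 1 t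
  obtain ⟨w, hw⟩ := h
  exact ⟨w, by rw [one_pow] at hw; linear_combination hw⟩

lemma key_pow (h : Polynomial ℤ) : ∀ n m : ℕ, Odd m →
    ∃ r : Polynomial ℤ,
      (1 + 2 * h) ^ (2 ^ (n + 1) * m)
        = 1 + 2 ^ (n + 2) * (h + h ^ 2) + 2 ^ (n + 3) * r := by
  intro n
  induction n with
  | zero =>
    intro m hm
    obtain ⟨t, ht⟩ := hm
    set u : Polynomial ℤ := h + h ^ 2 with hu
    obtain ⟨w, hw⟩ := one_add_pow_aux (8 * (u + 2 * u ^ 2)) t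
    refine ⟨(u + 2 * u ^ 2) * w * (1 + 4 * u), ?_⟩
    have e1 : (2 : ℕ) ^ (0 + 1) * m = 2 * m := by ring
    rw [e1, pow_mul]
    have e2 : (1 + 2 * h) ^ 2 = 1 + 4 * u := by rw [hu]; ring
    rw [e2, ht]
    have e3 : (1 + 4 * u) ^ (2 * t + 1) = ((1 + 4 * u) ^ 2) ^ t * (1 + 4 * u) := by
      rw [← pow_mul, pow_succ]
    rw [e3]
    have e4 : (1 + 4 * u) ^ 2 = 1 + 8 * (u + 2 * u ^ 2) := by ring
    rw [e4, hw]
    ring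
  | succ n ih =>
    intro m hm
    obtain ⟨r, hr⟩ := ih m hm
    refine ⟨r + 2 ^ n * (h + h ^ 2) ^ 2 + 2 ^ (n + 2) * (h + h ^ 2) * r
        + 2 ^ (n + 2) * r ^ 2, ?_⟩
    have e1 : (2 : ℕ) ^ (n + 1 + 1) * m = 2 ^ (n + 1) * m * 2 := by ring
    rw [e1, pow_mul, hr]
    ring

/-- For `k` even positive with `n = v₂(k)` and `g h ∈ ℤ[x]`, every coefficient of
`g^k·(1+2h)^k - g^k - 2^(n+1)·g^k·(h+h²)` is divisible by `2^(n+2)`. -/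
theorem coeff_congr_pow_two (k : ℕ) (hk : 0 < k) (hke : Even k) (n : ℕ)
    (hn : n = padicValNat 2 k) (g h : Polynomial ℤ) (i : ℕ) :
    (2 ^ (n + 2) : ℤ) ∣
      (g ^ k * (1 + 2 * h) ^ k - g ^ k - 2 ^ (n + 1) * (g ^ k * (h + h ^ 2))).coeff i := by
  have hk0 : k ≠ 0 := hk.ne'
  have h2k : 2 ∣ k := hke.two_dvd
  have hn1 : 1 ≤ n := by
    rw [hn]
    exact one_le_padicValNat_of_dvd hk0 (by simpa using h2k)
  obtain ⟨n', rfl⟩ : ∃ n', n = n' + 1 := ⟨n - 1, (Nat.succ_pred_eq_of_pos hn1).symm⟩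
  -- k = 2^n * m with m odd
  have hkeq : 2 ^ (n' + 1) * (k / 2 ^ (n' + 1)) = k := by
    rw [hn]
    exact Nat.ordProj_mul_ordCompl_eq_self k 2
  set m := k / 2 ^ (n' + 1) with hm
  have hmodd : Odd m := by
    rw [hm, hn]
    have := Nat.not_dvd_ordCompl Nat.prime_two hk0
    exact Nat.odd_iff.mpr (Nat.two_dvd_ne_zero.mp this)
  obtain ⟨r, hr⟩ := key_pow h n' m hmodd
  have hp : g ^ k * (1 + 2 * h) ^ k - g ^ k - 2 ^ (n' + 1 + 1) * (g ^ k * (h + h ^ 2))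
      = C ((2 : ℤ) ^ (n' + 1 + 2)) * (g ^ k * r) := by
    have hC : (C ((2 : ℤ) ^ (n' + 1 + 2)) : Polynomial ℤ) = 2 ^ (n' + 1 + 2) := by
      simp
    rw [hC, ← hkeq, hr]
    ring
  rw [hp, coeff_C_mul]
  exact Dvd.intro _ rfl
end

section
/- Let $k$ be an even positive integer with $n = v_2(k)$, and let $\pi : (\mathbb{Z}/2^{n+2}\mathbb{Z})[x] \to \mathbb{F}_2[x]$ be the ring homomorphism induced by reduction modulo $2$ on coefficients. Then for every $P \in (\mathbb{Z}/2^{n+2}\mathbb{Z})[x]$ with $\pi(P) \in K(k, \mathbb{F}_2[x])$, we have $2^{n+1}\cdot P \in J(k, (\mathbb{Z}/2^{n+2}\mathbb{Z})[x])$. -/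
open Polynomial

/-- `K(k,R)`: the additive subgroup of `R` generated by the elements of the form
`g ^ k` and `g ^ k * (h + h ^ 2)` for `g h : R`. -/
def Kgrp (k : ℕ) (R : Type*) [CommRing R] : AddSubgroup R :=
  AddSubgroup.closure
    {r : R | (∃ g : R, r = g ^ k) ∨ ∃ g h : R, r = g ^ k * (h + h ^ 2)}


private lemma aux_sq {R : Type*} [CommRing R] (a : R) (j : ℕ) :
    ∃ c : R, (1 + 2*a)^(2^(j+1)) = 1 + 2^(j+2)*(a+a^2) + 2^(j+3)*c := by
  induction j with
  | zero => exact ⟨0, by norm_num; ring⟩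
  | succ j ih =>
    obtain ⟨c, hc⟩ := ih
    refine ⟨c + 2^j*(a+a^2)^2 + 2^(j+2)*(c^2 + (a+a^2)*c), ?_⟩
    have h : (2:ℕ)^(j+1+1) = 2^(j+1)*2 := by ring
    rw [h, pow_mul, hc]
    ring

private lemma aux_binom {R : Type*} [CommRing R] (e : R) (he : e*e = 0) (m : ℕ) :
    (1+e)^m = 1 + (m : R)*e := by
  induction m with
  | zero => simp
  | succ m ih =>
    calc (1+e)^(m+1) = (1+(m:R)*e)*(1+e) := by rw [pow_succ, ih]
    _ = 1 + ((m:ℕ)+1:R)*e + (m:R)*(e*e) := by ring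
    _ = 1 + ((m+1 : ℕ) : R)*e := by rw [he]; push_cast; ring

private lemma aux_key {k n : ℕ} (hk : 0 < k) (hke : Even k) (hn : n = padicValNat 2 k)
    {R : Type*} [CommRing R] (h2 : (2:R)^(n+2) = 0) (a : R) :
    (1 + 2*a)^k = 1 + 2^(n+1)*(a+a^2) := by
  have hn1 : 1 ≤ n := by
    rw [hn]
    exact one_le_padicValNat_of_dvd hk.ne' hke.two_dvd
  obtain ⟨j, rfl⟩ : ∃ j, n = j + 1 := ⟨n - 1, by omega⟩
  -- k = 2^n * m with m odd
  set m := k / 2^(j+1) with hm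
  have hfac : k.factorization 2 = j + 1 := by
    rw [Nat.factorization_def k Nat.prime_two, ← hn]
  have hkm : 2^(j+1) * m = k := by
    rw [hm, ← hfac]; exact Nat.ordProj_mul_ordCompl_eq_self k 2
  have hmodd : ¬ 2 ∣ m := by
    rw [hm, ← hfac]; exact Nat.not_dvd_ordCompl Nat.prime_two hk.ne'
  obtain ⟨t, ht⟩ : ∃ t, m = 2*t + 1 := ⟨m/2, by omega⟩
  set u : R := a + a^2 with hu
  set e : R := 2^(j+2) * u with he
  have h2e : 2 * e = 0 := by
    rw [he, ← mul_assoc]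
    have : (2:R) * 2^(j+2) = 2^(j+1+2) := by ring
    rw [this, h2, zero_mul]
  have hee : e * e = 0 := by
    rw [he]
    have : (2:R)^(j+2) * u * (2^(j+2)*u) = 2^(j+1+2) * (2^(j+1) * u * u) := by ring
    rw [this, h2, zero_mul]
  obtain ⟨c, hc⟩ := aux_sq a j
  have hpow : (1+2*a)^(2^(j+1)) = 1 + e := by
    rw [hc, he]
    have : (2:R)^(j+3)*c = 2^(j+1+2) * (c) := by ring
    rw [this, h2]; ring
  calc (1+2*a)^k = ((1+2*a)^(2^(j+1)))^m := by rw [← pow_mul, hkm]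
  _ = (1+e)^m := by rw [hpow]
  _ = 1 + (m:R)*e := aux_binom e hee m
  _ = 1 + e + (t:R)*(2*e) := by rw [ht]; push_cast; ring
  _ = 1 + 2^(j+1+1)*u := by rw [h2e, mul_zero, add_zero, he]

private lemma aux_ker {n : ℕ} (x : ZMod (2^(n+2)))
    (hx : ZMod.castHom (dvd_pow_self 2 (Nat.succ_ne_zero (n + 1))) (ZMod 2) x = 0) :
    (2:ZMod (2^(n+2)))^(n+1) * x = 0 := by
  haveI : NeZero (2^(n+2)) := ⟨by positivity⟩
  have hval : ((x.val : ℕ) : ZMod 2) = 0 := by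
    rw [ZMod.natCast_val, ← ZMod.castHom_apply (h := (dvd_pow_self 2 (Nat.succ_ne_zero (n + 1)))), hx]
  obtain ⟨w, hw⟩ := (ZMod.natCast_eq_zero_iff _ _).mp hval
  have hxv : ((x.val : ℕ) : ZMod (2^(n+2))) = x := ZMod.natCast_rightInverse x
  rw [← hxv, hw]
  push_cast
  have : (2:ZMod (2^(n+2)))^(n+1) * (2 * (w:ZMod (2^(n+2)))) = 2^(n+2) * w := by ring
  rw [this]
  have h2 : ((2^(n+2) : ℕ) : ZMod (2^(n+2))) = 0 := ZMod.natCast_self _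
  push_cast at h2
  rw [h2, zero_mul]

private lemma aux_ker_poly {n : ℕ} (P : Polynomial (ZMod (2^(n+2))))
    (hP : P.map (ZMod.castHom (dvd_pow_self 2 (Nat.succ_ne_zero (n + 1))) (ZMod 2)) = 0) :
    (2 ^ (n + 1) : ℤ) • P = 0 := by
  ext i
  rw [Polynomial.coeff_smul, Polynomial.coeff_zero, zsmul_eq_mul]
  have h := congrArg (fun Q => Polynomial.coeff Q i) hP
  simp only [Polynomial.coeff_map, Polynomial.coeff_zero] at h
  have := aux_ker (P.coeff i) h
  push_cast
  convert this using 2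

/-- Let `k` be even positive with `n = v₂(k)` and let `π : (ℤ/2^(n+2)ℤ)[x] → 𝔽₂[x]` be
reduction of coefficients mod `2`. If `π(P) ∈ K(k, 𝔽₂[x])`, then
`2^(n+1)·P ∈ J(k, (ℤ/2^(n+2)ℤ)[x])`. -/
theorem smul_mem_Jgrp_of_map_mem_Kgrp (k : ℕ) (hk : 0 < k) (hke : Even k) (n : ℕ)
    (hn : n = padicValNat 2 k) (P : Polynomial (ZMod (2 ^ (n + 2))))
    (hP : P.map (ZMod.castHom (dvd_pow_self 2 (Nat.succ_ne_zero (n + 1))) (ZMod 2)) ∈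
      Kgrp k (Polynomial (ZMod 2))) :
    (2 ^ (n + 1) : ℤ) • P ∈ Jgrp k (Polynomial (ZMod (2 ^ (n + 2)))) := by
  set f := ZMod.castHom (dvd_pow_self 2 (Nat.succ_ne_zero (n + 1))) (ZMod 2) with hf
  -- surjectivity of coefficient reduction
  have hfs : Function.Surjective f := by
    intro x
    obtain ⟨a, rfl⟩ := ZMod.natCast_zmod_surjective x
    exact ⟨(a : ZMod (2^(n+2))), map_natCast f a⟩
  have hsurj : ∀ q : Polynomial (ZMod 2), ∃ G : Polynomial (ZMod (2^(n+2))), G.map f = q :=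
    fun q => Polynomial.map_surjective f hfs q
  -- char: 2^(n+2) = 0 in R
  have h2 : (2 : Polynomial (ZMod (2^(n+2))))^(n+2) = 0 := by
    have h0 : ((2^(n+2) : ℕ) : ZMod (2^(n+2))) = 0 := ZMod.natCast_self _
    have : ((2^(n+2) : ℕ) : Polynomial (ZMod (2^(n+2)))) = Polynomial.C (((2^(n+2) : ℕ)) : ZMod (2^(n+2))) :=
      (map_natCast (Polynomial.C : ZMod (2^(n+2)) →+* Polynomial (ZMod (2^(n+2)))) _).symm
    rw [h0, map_zero] at this
    calc (2 : Polynomial (ZMod (2^(n+2))))^(n+2) = ((2^(n+2) : ℕ) : Polynomial (ZMod (2^(n+2)))) := by push_cast; ring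
    _ = 0 := this
  have hpowmem : ∀ G : Polynomial (ZMod (2^(n+2))),
      G ^ k ∈ Jgrp k (Polynomial (ZMod (2^(n+2)))) := by
    intro G
    apply AddSubgroup.subset_closure
    exact ⟨G, rfl⟩
  -- the smul depends only on the image
  have hdiff : ∀ P₁ P₂ : Polynomial (ZMod (2^(n+2))), P₁.map f = P₂.map f →
      (2 ^ (n + 1) : ℤ) • P₁ = (2 ^ (n + 1) : ℤ) • P₂ := by
    intro P₁ P₂ h
    have := aux_ker_poly (P₁ - P₂) (by rw [Polynomial.map_sub, h, sub_self])
    rw [smul_sub, sub_eq_zero] at this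
    exact this
  have main : ∀ q ∈ Kgrp k (Polynomial (ZMod 2)), ∀ P' : Polynomial (ZMod (2^(n+2))), P'.map f = q →
      (2 ^ (n + 1) : ℤ) • P' ∈ Jgrp k (Polynomial (ZMod (2^(n+2)))) := by
    intro q hq
    induction hq using AddSubgroup.closure_induction with
    | mem x hx =>
      intro P' hP'
      rcases hx with ⟨g, rfl⟩ | ⟨g, h, rfl⟩
      · obtain ⟨G, hG⟩ := hsurj g
        have hmap : (G^k).map f = g^k := by rw [Polynomial.map_pow, hG]
        rw [hdiff P' (G^k) (by rw [hP', hmap])]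
        exact AddSubgroup.zsmul_mem _ (hpowmem G) _
      · obtain ⟨G, hG⟩ := hsurj g
        obtain ⟨H, hH⟩ := hsurj h
        have hmap : (G^k * (H + H^2)).map f = g^k * (h + h^2) := by
          rw [Polynomial.map_mul, Polynomial.map_pow, Polynomial.map_add,
            Polynomial.map_pow, hG, hH]
        rw [hdiff P' (G^k * (H + H^2)) (by rw [hP', hmap])]
        have hkey : (G * (1 + 2*H))^k = G^k + 2^(n+1) * (G^k * (H + H^2)) := by
          rw [mul_pow, aux_key hk hke hn h2 H]; ring
        have : (2 ^ (n + 1) : ℤ) • (G^k * (H + H^2))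
            = (G * (1 + 2*H))^k - G^k := by
          rw [hkey, zsmul_eq_mul]; push_cast; ring
        rw [this]
        exact sub_mem (hpowmem (G * (1 + 2*H))) (hpowmem G)
    | zero =>
      intro P' hP'
      rw [aux_ker_poly P' hP']
      exact zero_mem _
    | add x y hx hy ihx ihy =>
      intro P' hP'
      obtain ⟨X, hX⟩ := hsurj x
      have hY : (P' - X).map f = y := by rw [Polynomial.map_sub, hX, hP']; ring
      have : P' = X + (P' - X) := by ring
      rw [this, smul_add]
      exact add_mem (ihx X hX) (ihy (P' - X) hY)
    | neg x hx ih =>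
      intro P' hP'
      have h' : (-P').map f = x := by rw [Polynomial.map_neg, hP', neg_neg]
      have : (2 ^ (n + 1) : ℤ) • P' = -((2 ^ (n + 1) : ℤ) • (-P')) := by
        rw [smul_neg, neg_neg]
      rw [this]
      exact neg_mem (ih (-P') h')
  exact main _ hP P rfl
end

section
/- Let $k$ be an even positive integer with $n = v_2(k)$, and suppose $K(k, \mathbb{F}_2[x]) = \mathbb{F}_2[x]$. Then $m(k, (\mathbb{Z}/2^{n+2}\mathbb{Z})[x])$ divides $2^{n+1}$. -/
open Polynomial

private lemma odd_pow_aux {R : Type*} [CommRing R] (t : R) (j : ℕ) :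
    ∃ s, (1 + 2*t) ^ (2*j+1) = 1 + 2*t + 4*s := by
  induction j with
  | zero => exact ⟨0, by ring⟩
  | succ j ih =>
    obtain ⟨s, hs⟩ := ih
    refine ⟨t + 3*t^2 + 2*t^3 + s + 4*t*s + 4*t^2*s, ?_⟩
    have h : 2*(j+1)+1 = (2*j+1) + 2 := by ring
    rw [h, pow_add, hs]
    ring

private lemma two_pow_aux {R : Type*} [CommRing R] (t : R) :
    ∀ n : ℕ, 1 ≤ n → ∃ s, (1 + 2*t) ^ (2^n) = 1 + 2^(n+1)*(t+t^2) + 2^(n+2)*s := by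
  refine Nat.le_induction ?_ ?_
  · refine ⟨0, ?_⟩
    norm_num
    ring
  · rintro n hn ⟨s, hs⟩
    obtain ⟨p, rfl⟩ : ∃ p, n = p + 1 := ⟨n - 1, by omega⟩
    refine ⟨s + 2^p*(t+t^2)^2 + 2^(p+2)*s^2 + 2^(p+2)*(t+t^2)*s, ?_⟩
    rw [pow_succ 2 (p+1), pow_mul, hs]
    ring

private lemma key_pow_s15 {R : Type*} [CommRing R] (t : R) (n m : ℕ) (hn : 1 ≤ n) (hm : Odd m) :
    ∃ s, (1 + 2*t) ^ (2^n * m) = 1 + 2^(n+1)*(t+t^2) + 2^(n+2)*s := by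
  obtain ⟨j, rfl⟩ := hm
  obtain ⟨s₀, hs₀⟩ := odd_pow_aux t j
  obtain ⟨s, hs⟩ := two_pow_aux (t + 2*s₀) n hn
  refine ⟨s + s₀ + 2*t*s₀ + 2*s₀^2, ?_⟩
  rw [mul_comm (2^n) (2*j+1), pow_mul, hs₀]
  have h : (1 : R) + 2*t + 4*s₀ = 1 + 2*(t + 2*s₀) := by ring
  rw [h, hs]
  ring

private lemma smul_mem_J {R : Type*} [CommRing R] {k n m : ℕ} (hkm : k = 2^n * m)
    (hn : 1 ≤ n) (hm : Odd m) (h2 : (2:R)^(n+2) = 0) (g t : R) :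
    ((2:ℤ)^(n+1)) • (g^k * (t+t^2)) ∈ Jgrp k R := by
  obtain ⟨s, hs⟩ := key_pow_s15 t n m hn hm
  have h1 : ((2:ℤ)^(n+1)) • (g^k * (t+t^2)) = (g + 2*(g*t))^k - g^k := by
    have e : (g + 2*(g*t)) = g * (1 + 2*t) := by ring
    rw [e, mul_pow, hkm, hs, zsmul_eq_mul]
    push_cast
    linear_combination (-(g^(2^n*m))*s) * h2
  rw [h1]
  exact (Jgrp k R).sub_mem (AddSubgroup.subset_closure ⟨g + 2*(g*t), rfl⟩)
    (AddSubgroup.subset_closure ⟨g, rfl⟩)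

/-- Let `k` be even positive with `n = v₂(k)`. If `K(k, 𝔽₂[x]) = 𝔽₂[x]`, then
`m(k, (ℤ/2^(n+2)ℤ)[x])` divides `2^(n+1)`. -/
theorem mval_dvd_pow_of_Kgrp_eq_top (k : ℕ) (hk : 0 < k) (hke : Even k) (n : ℕ)
    (hn : n = padicValNat 2 k) (hK : Kgrp k (Polynomial (ZMod 2)) = ⊤) :
    mval k (Polynomial (ZMod (2 ^ (n + 2)))) ∣ 2 ^ (n + 1) := by
  have hn1 : 1 ≤ n := by
    rw [hn]
    exact one_le_padicValNat_of_dvd hk.ne' hke.two_dvd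
  have hfac : n = k.factorization 2 := by
    rw [hn, Nat.factorization_def k Nat.prime_two]
  set m := k / 2^n with hmdef
  have hkm : k = 2^n * m := by
    rw [hmdef, hfac]
    exact (Nat.ordProj_mul_ordCompl_eq_self k 2).symm
  have hm : Odd m := by
    have h2 : ¬ 2 ∣ m := by
      rw [hmdef, hfac]
      exact Nat.not_dvd_ordCompl Nat.prime_two hk.ne'
    exact Nat.odd_iff.mpr (by omega)
  set R₀ := Polynomial (ZMod (2^(n+2))) with hR₀
  have hNeZero : NeZero ((2:ℕ)^(n+2)) := ⟨by positivity⟩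
  have hchar : (2:R₀)^(n+2) = 0 := by
    have h := CharP.cast_eq_zero R₀ (2^(n+2))
    push_cast at h
    exact h
  have hdvd2 : (2:ℕ) ∣ 2^(n+2) := dvd_pow_self 2 (by omega)
  set π : R₀ →+* Polynomial (ZMod 2) := Polynomial.mapRingHom (ZMod.castHom hdvd2 (ZMod 2)) with hπ
  have hπsurj : Function.Surjective π := by
    apply Polynomial.map_surjective
    intro y
    obtain ⟨c, rfl⟩ := ZMod.natCast_zmod_surjective y
    exact ⟨(c : ZMod (2^(n+2))), map_natCast _ c⟩
  have hker : ∀ x : R₀, π x = 0 → (2:R₀)^(n+1) * x = 0 := by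
    intro x hx
    have hcoeff : ∀ j, (2:ZMod (2^(n+2)))^(n+1) * x.coeff j = 0 := by
      intro j
      have hπx : π x = Polynomial.map (ZMod.castHom hdvd2 (ZMod 2)) x := rfl
      rw [hπx] at hx
      have h0 := congrArg (fun p => Polynomial.coeff p j) hx
      simp only [Polynomial.coeff_map, Polynomial.coeff_zero] at h0
      set c := x.coeff j with hc
      have hval : (((c.val : ℕ)) : ZMod 2) = 0 := by
        rwa [ZMod.castHom_apply, ← ZMod.natCast_val] at h0
      obtain ⟨d, hd⟩ := (ZMod.natCast_eq_zero_iff _ _).mp hval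
      have hcval : c = ((c.val : ℕ) : ZMod (2^(n+2))) := by
        rw [ZMod.natCast_val, ZMod.cast_id]
      calc (2:ZMod (2^(n+2)))^(n+1) * c = ((2^(n+2) * d : ℕ) : ZMod (2^(n+2))) := by
            rw [hcval, hd]; push_cast; ring
        _ = 0 := by rw [Nat.cast_mul, ZMod.natCast_self, zero_mul]
    have h2C : (2:R₀)^(n+1) = Polynomial.C ((2:ZMod (2^(n+2)))^(n+1)) := by
      rw [map_pow, map_ofNat]
    ext j
    rw [h2C, Polynomial.coeff_C_mul, hcoeff j, Polynomial.coeff_zero]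
  have hcongr : ∀ r s : R₀, π r = π s → ((2:ℤ)^(n+1)) • r = ((2:ℤ)^(n+1)) • s := by
    intro r s h
    have h0 : (2:R₀)^(n+1) * (r - s) = 0 := hker _ (by rw [map_sub, h, sub_self])
    have h1 : ((2:ℤ)^(n+1)) • (r - s) = 0 := by
      rw [zsmul_eq_mul]; push_cast; exact h0
    rw [smul_sub] at h1
    exact sub_eq_zero.mp h1
  have main : ∀ f : Polynomial (ZMod 2), f ∈ Kgrp k (Polynomial (ZMod 2)) →
      ∀ r : R₀, π r = f → ((2:ℤ)^(n+1)) • r ∈ Jgrp k R₀ := by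
    intro f hf
    induction hf using AddSubgroup.closure_induction with
    | mem x hx =>
      rcases hx with ⟨g₀, rfl⟩ | ⟨g₀, h₀, rfl⟩
      · obtain ⟨g, rfl⟩ := hπsurj g₀
        intro r hr
        have : π r = π (g^k) := by rw [hr, map_pow]
        rw [hcongr r (g^k) this]
        refine AddSubgroup.zsmul_mem _ ?_ _
        exact AddSubgroup.subset_closure ⟨g, rfl⟩
      · obtain ⟨g, rfl⟩ := hπsurj g₀
        obtain ⟨h, rfl⟩ := hπsurj h₀
        intro r hr
        have : π r = π (g^k * (h + h^2)) := by rw [hr]; simp [map_pow, map_mul, map_add]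
        rw [hcongr r _ this]
        exact smul_mem_J hkm hn1 hm hchar g h
    | zero =>
      intro r hr
      have : π r = π 0 := by simpa using hr
      rw [hcongr r 0 this, smul_zero]
      exact (Jgrp k R₀).zero_mem
    | add x y hx hy px py =>
      intro r hr
      obtain ⟨a, ha⟩ := hπsurj x
      have hb : π (r - a) = y := by rw [map_sub, hr, ha]; ring
      have hra : r = a + (r - a) := by ring
      rw [hra, smul_add]
      exact (Jgrp k R₀).add_mem (px a ha) (py _ hb)
    | neg x hx px =>
      intro r hr
      have h1 : π (-r) = x := by rw [map_neg, hr, neg_neg]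
      have h2 := px (-r) h1
      have e : ((2:ℤ)^(n+1)) • r = -(((2:ℤ)^(n+1)) • (-r)) := by rw [smul_neg, neg_neg]
      rw [e]
      exact (Jgrp k R₀).neg_mem h2
  have hmem : ((2:ℤ)^(n+1)) ∈ Ggrp k R₀ := by
    intro r
    have hmemK : π r ∈ Kgrp k (Polynomial (ZMod 2)) := by
      rw [hK]; exact AddSubgroup.mem_top _
    exact main (π r) hmemK r rfl
  rw [← Ideal.span_singleton_generator (Ggrp k R₀)] at hmem
  have hdvd : Submodule.IsPrincipal.generator (Ggrp k R₀) ∣ (2:ℤ)^(n+1) :=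
    Ideal.mem_span_singleton.mp hmem
  have := Int.natAbs_dvd_natAbs.mpr hdvd
  simpa [mval, Int.natAbs_pow] using this
end

section
/- Let $k$ be a positive integer not divisible by $3$ and let $j$ be a positive integer. Then $K(k, \mathbb{F}_{2^j}) = \mathbb{F}_{2^j}$, where $\mathbb{F}_{2^j}$ is the finite field with $2^j$ elements. -/
open Polynomial
set_option maxHeartbeats 1000000
set_option synthInstance.maxHeartbeats 400000

/-- For `k` a positive integer not divisible by `3` and `j` a positive integer,
`K(k, 𝔽_{2^j}) = 𝔽_{2^j}`. -/
theorem Kgrp_galoisField_eq_top (k j : ℕ) (hk : 0 < k) (h3 : ¬ 3 ∣ k) (hj : 0 < j) :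
    Kgrp k (GaloisField 2 j) = ⊤ := by
  classical
  set R := GaloisField 2 j with hRdef
  haveI : Fintype R := Fintype.ofFinite R
  -- generators
  have hpow : ∀ g : R, g ^ k ∈ Kgrp k R := fun g =>
    AddSubgroup.subset_closure (Or.inl ⟨g, rfl⟩)
  have hmix : ∀ g h : R, g ^ k * (h + h ^ 2) ∈ Kgrp k R := fun g h =>
    AddSubgroup.subset_closure (Or.inr ⟨g, h, rfl⟩)
  -- the Artin-Schreier additive map
  let φ : R →+ R := AddMonoidHom.mk' (fun h => h + h ^ 2) (by
    intro a b
    have h2 : (a + b) ^ 2 = a ^ 2 + b ^ 2 := add_pow_char (p := 2) ..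
    show (a + b) + (a + b) ^ 2 = (a + a ^ 2) + (b + b ^ 2)
    rw [h2]; ring)
  set T : AddSubgroup R := φ.range with hTdef
  have hTK : ∀ x ∈ T, x ∈ Kgrp k R := by
    rintro x ⟨h, rfl⟩
    have := hmix 1 h
    exact (by simpa using this : h + h ^ 2 ∈ Kgrp k R)
  -- kernel is {0, 1}
  have hker : (φ.ker : Set R) = {0, 1} := by
    ext x
    simp only [AddMonoidHom.mem_ker, Set.mem_insert_iff, Set.mem_singleton_iff]
    show x + x ^ 2 = 0 ↔ _
    have h2 : (2 : R) = 0 := by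
      have := CharP.cast_eq_zero R 2
      exact_mod_cast this
    constructor
    · intro hx
      have hx2 : x * (1 + x) = 0 := by linear_combination hx
      rcases mul_eq_zero.mp hx2 with h | h
      · exact Or.inl h
      · exact Or.inr (by linear_combination h - h2)
    · rintro (rfl | rfl)
      · ring
      · linear_combination h2
  -- cardinalities
  have hcardR : Nat.card R = 2 ^ j := GaloisField.card 2 j hj.ne'
  have hkercard : Nat.card φ.ker = 2 := by
    have : Nat.card φ.ker = ({0, 1} : Set R).ncard := by
      rw [← hker]; exact (Nat.card_coe_set_eq _)
    rw [this, Set.ncard_pair (zero_ne_one)]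
  have hlag : Nat.card R = Nat.card (R ⧸ φ.ker) * Nat.card φ.ker :=
    AddSubgroup.card_eq_card_quotient_mul_card_addSubgroup _
  have hquotT : Nat.card (R ⧸ φ.ker) = Nat.card T :=
    Nat.card_congr (QuotientAddGroup.quotientKerEquivRange φ).toEquiv
  have hcardT : Nat.card R = 2 * Nat.card T := by
    rw [hlag, hquotT, hkercard]; ring
  -- the quotient by T has exactly two elements
  have hquot2 : Nat.card (R ⧸ T) = 2 := by
    have hlag2 : Nat.card R = Nat.card (R ⧸ T) * Nat.card T :=
      AddSubgroup.card_eq_card_quotient_mul_card_addSubgroup _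
    have hTpos : 0 < Nat.card T := Nat.card_pos
    have := hcardT.symm.trans hlag2
    exact (Nat.eq_of_mul_eq_mul_right hTpos this.symm)
  -- key coset fact: any two elements outside T differ by an element of T
  have hcoset : ∀ x y : R, x ∉ T → y ∉ T → x - y ∈ T := by
    intro x y hx hy
    obtain ⟨a, b, hab, huniv⟩ := Nat.card_eq_two_iff.mp hquot2
    have h0 : ∀ z : R ⧸ T, z = a ∨ z = b := by
      intro z
      have : z ∈ ({a, b} : Set (R ⧸ T)) := huniv ▸ Set.mem_univ z
      simpa using this
    have hxq : (QuotientAddGroup.mk x : R ⧸ T) ≠ 0 := by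
      simpa [QuotientAddGroup.eq_zero_iff] using hx
    have hyq : (QuotientAddGroup.mk y : R ⧸ T) ≠ 0 := by
      simpa [QuotientAddGroup.eq_zero_iff] using hy
    have hxy : (QuotientAddGroup.mk x : R ⧸ T) = QuotientAddGroup.mk y := by
      rcases h0 0 with rfl | rfl
      · rcases h0 (QuotientAddGroup.mk x) with h | h
        · exact absurd h hxq
        · rcases h0 (QuotientAddGroup.mk y) with h' | h'
          · exact absurd h' hyq
          · rw [h, h']
      · rcases h0 (QuotientAddGroup.mk x) with h | h
        · rcases h0 (QuotientAddGroup.mk y) with h' | h'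
          · rw [h, h']
          · exact absurd h' hyq
        · exact absurd h hxq
    rwa [QuotientAddGroup.eq_iff_sub_mem] at hxy
  have h2R : (2 : R) = 0 := by
    have := CharP.cast_eq_zero R 2
    exact_mod_cast this
  -- main goal: every x is in Kgrp
  rw [eq_top_iff]
  intro x _
  by_cases hxT : x ∈ T
  · exact hTK x hxT
  by_cases hA : ∃ a : R, a ^ k ≠ 0 ∧ a ^ k ≠ 1
  · -- Case A
    obtain ⟨a, hc0, hc1⟩ := hA
    set c : R := a ^ k with hcdef
    -- claim : c does not stabilize T
    have hnstab : ∃ t ∈ T, c * t ∉ T := by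
      by_contra hstab
      push_neg at hstab
      -- then T is a module over the subring generated by c
      have hS : ∀ s ∈ Subring.closure ({c} : Set R), ∀ t ∈ T, s * t ∈ T := by
        intro s hs
        induction hs using Subring.closure_induction with
        | mem x hx => intro t ht; rw [Set.mem_singleton_iff] at hx; rw [hx]; exact hstab t ht
        | zero => intro t ht; rw [zero_mul]; exact zero_mem T
        | one => intro t ht; rwa [one_mul]
        | add x y hx hy ihx ihy =>
            intro t ht; rw [add_mul]; exact add_mem (ihx t ht) (ihy t ht)
        | neg x hx ihx => intro t ht; rw [neg_mul]; exact neg_mem (ihx t ht)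
        | mul x y hx hy ihx ihy =>
            intro t ht; rw [mul_assoc]; exact ihx _ (ihy t ht)
      set S : Subring R := Subring.closure ({c} : Set R) with hSdef
      haveI : Fintype S := Fintype.ofFinite S
      letI : Field S := Fintype.fieldOfDomain S
      let T' : Submodule S R :=
        { carrier := (T : Set R)
          add_mem' := fun ha hb => add_mem ha hb
          zero_mem' := zero_mem T
          smul_mem' := fun s x hx => hS (↑s) s.2 x hx }
      haveI : Fintype T' := Fintype.ofFinite T'
      have hc2 : Fintype.card T' = Fintype.card S ^ Module.finrank S T' :=
        Module.card_eq_pow_finrank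
      have hc1' : Fintype.card R = Fintype.card S ^ Module.finrank S R :=
        Module.card_eq_pow_finrank
      -- card S ≥ 3
      have hs3 : 3 ≤ Fintype.card S := by
        have hcmem : c ∈ S := Subring.subset_closure rfl
        set cS : S := ⟨c, hcmem⟩ with hcS
        have h01 : (0 : S) ≠ 1 := zero_ne_one
        have h0c : (0 : S) ≠ cS := by
          intro h
          apply hc0
          have := congrArg Subtype.val h
          simpa [hcS] using this.symm
        have h1c : (1 : S) ≠ cS := by
          intro h
          apply hc1
          have := congrArg Subtype.val h
          simpa [hcS] using this.symm
        have hfin : ({0, 1, cS} : Finset S).card = 3 := by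
          rw [Finset.card_insert_of_notMem (by simp [h01, h0c]),
            Finset.card_insert_of_notMem (by simp [h1c]), Finset.card_singleton]
        calc 3 = ({0, 1, cS} : Finset S).card := hfin.symm
        _ ≤ Fintype.card S := Finset.card_le_univ _
      -- relate the cards
      have hTT' : Nat.card T = Fintype.card T' := by
        rw [← Nat.card_eq_fintype_card]
        exact Nat.card_congr (Equiv.subtypeEquivRight (fun x => Iff.rfl))
      have hRc : Fintype.card R = Nat.card R := (Nat.card_eq_fintype_card).symm
      -- now derive a contradiction
      set s := Fintype.card S with hsdef
      set aexp := Module.finrank S R with haexp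
      set bexp := Module.finrank S T' with hbexp
      have hkey : s ^ aexp = 2 * s ^ bexp := by
        rw [← hc1', ← hc2, ← hTT', hRc, hcardT]
      have hslt : 1 < s := by omega
      have hblta : bexp < aexp := by
        have h1 : s ^ bexp < s ^ aexp := by
          rw [hkey]
          have : 0 < s ^ bexp := pow_pos (by omega) _
          omega
        exact (Nat.pow_lt_pow_iff_right hslt).mp h1
      have hsub : s ^ bexp * s ^ (aexp - bexp) = s ^ bexp * 2 := by
        rw [← pow_add, Nat.add_sub_cancel' hblta.le, hkey]; ring
      have hsub2 : s ^ (aexp - bexp) = 2 :=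
        Nat.eq_of_mul_eq_mul_left (pow_pos (by omega) _) hsub
      have : s ≤ s ^ (aexp - bexp) := by
        calc s = s ^ 1 := (pow_one s).symm
        _ ≤ s ^ (aexp - bexp) := Nat.pow_le_pow_right (by omega) (by omega)
      omega
    obtain ⟨t, htT, hct⟩ := hnstab
    have hxct : x - c * t ∈ T := hcoset x (c * t) hxT hct
    have hctK : c * t ∈ Kgrp k R := by
      obtain ⟨h, rfl⟩ := htT
      exact hmix a h
    have := add_mem (hTK _ hxct) hctK
    simpa using this
  · -- Case B : all k-th powers are 0 or 1
    push_neg at hA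
    -- 1 is not in T
    have h1T : (1 : R) ∉ T := by
      rintro ⟨h, hh⟩
      have hh' : h + h ^ 2 = 1 := hh
      have hne0 : h ≠ 0 := by rintro rfl; simp at hh'
      have hne1 : h ≠ 1 := by
        rintro rfl
        exact one_ne_zero (by linear_combination hh' : (1 : R) = 0)
      have h3' : h ^ 3 = 1 := by linear_combination (h - 1) * hh' + (h - 1) * h2R
      have hord : orderOf h = 3 := by
        have hdvd : orderOf h ∣ 3 := orderOf_dvd_of_pow_eq_one h3'
        rcases (Nat.prime_three.eq_one_or_self_of_dvd _ hdvd) with h1 | h1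
        · exact absurd (orderOf_eq_one_iff.mp h1) hne1
        · exact h1
      have hk1 : h ^ k = 1 :=
        hA h (fun h0 => hne0 ((pow_eq_zero_iff hk.ne').mp h0))
      have : (3 : ℕ) ∣ k := hord ▸ orderOf_dvd_of_pow_eq_one hk1
      exact h3 this
    have hx1 : x - 1 ∈ T := hcoset x 1 hxT h1T
    have h1K : (1 : R) ∈ Kgrp k R := by simpa using hpow 1
    have := add_mem (hTK _ hx1) h1K
    simpa using this
end

section
/- Let $k$ be a positive integer not divisible by $3$. Then $K(k, \mathbb{F}_2[x]) = \mathbb{F}_2[x]$. -/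
open Polynomial
section basic
variable {k : ℕ} {R : Type*} [CommRing R]

theorem Kgrp.pow_mem (g : R) : g ^ k ∈ Kgrp k R :=
  AddSubgroup.subset_closure (Or.inl ⟨g, rfl⟩)

theorem Kgrp.pow_mul_mem (g h : R) : g ^ k * (h + h ^ 2) ∈ Kgrp k R :=
  AddSubgroup.subset_closure (Or.inr ⟨g, h, rfl⟩)

theorem Kgrp.as_mem (h : R) : h + h ^ 2 ∈ Kgrp k R := by
  simpa using Kgrp.pow_mul_mem (k := k) 1 h

theorem Kgrp.one_mem : (1 : R) ∈ Kgrp k R := by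
  simpa using Kgrp.pow_mem (k := k) (1 : R)

theorem Kgrp.of_sq_mem {f : R} (hf : f ^ 2 ∈ Kgrp k R) : f ∈ Kgrp k R := by
  have : f = (f + f ^ 2) - f ^ 2 := by ring
  rw [this]; exact AddSubgroup.sub_mem _ (Kgrp.as_mem f) hf

theorem Kgrp.of_pow_two_pow_mem {f : R} {j : ℕ} (hf : f ^ (2 ^ j) ∈ Kgrp k R) :
    f ∈ Kgrp k R := by
  induction j with
  | zero => simpa using hf
  | succ n ih =>
    apply ih
    apply Kgrp.of_sq_mem
    rwa [pow_succ, pow_mul] at hf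

-- char-two helpers
theorem two_zero_add_pow_two_pow {S : Type*} [CommRing S] (h2 : (2 : S) = 0) (a b : S) (j : ℕ) :
    (a + b) ^ 2 ^ j = a ^ 2 ^ j + b ^ 2 ^ j := by
  induction j with
  | zero => simp
  | succ n ih =>
    rw [pow_succ, pow_mul, pow_mul, pow_mul, ih]
    linear_combination (a ^ 2 ^ n * b ^ 2 ^ n) * h2

end basic

section poly

local notation "Rp" => Polynomial (ZMod 2)

theorem two_eq_zero_poly : (2 : Rp) = 0 := by
  have h : ((2 : ℕ) : ZMod 2) = 0 := by decide
  have : (2 : Rp) = ((2 : ℕ) : Rp) := by norm_cast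
  rw [this, ← Polynomial.C_eq_natCast, h, map_zero]

variable {k : ℕ}

theorem w_mem_of_ge (hn : k ≤ n) : (X : Rp) ^ n + X ^ (n + k) ∈ Kgrp k Rp := by
  obtain ⟨m, rfl⟩ := Nat.exists_eq_add_of_le hn
  have e1 := Kgrp.as_mem (k := k) ((X : Rp) ^ (k + m))
  have e2 := Kgrp.pow_mul_mem (k := k) ((X : Rp) ^ 2) (X ^ m)
  have key : (X : Rp) ^ (k + m) + X ^ (k + m + k) =
      ((X : Rp) ^ (k + m) + ((X : Rp) ^ (k + m)) ^ 2) +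
      (((X : Rp) ^ 2) ^ k * ((X : Rp) ^ m + ((X : Rp) ^ m) ^ 2)) := by
    have h2 := two_eq_zero_poly
    linear_combination (-(X : Rp) ^ (2 * (k + m))) * h2
  rw [key]
  exact AddSubgroup.add_mem _ e1 e2

theorem telescope_mem (hk : 0 < k) (M : ℕ) :
    ∀ n, k ≤ n → (X : Rp) ^ n + X ^ (n + M * k) ∈ Kgrp k Rp := by
  induction M with
  | zero =>
    intro n hn
    have : (X : Rp) ^ n + X ^ (n + 0 * k) = (X : Rp) ^ n * 2 := by
      rw [Nat.zero_mul, Nat.add_zero]; ring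
    rw [this, two_eq_zero_poly, mul_zero]
    exact AddSubgroup.zero_mem _
  | succ M ih =>
    intro n hn
    have h1 := ih n hn
    have h2 := w_mem_of_ge (k := k) (n := n + M * k) (le_trans hn (Nat.le_add_right _ _))
    have key : (X : Rp) ^ n + X ^ (n + (M + 1) * k) =
        ((X : Rp) ^ n + X ^ (n + M * k)) + ((X : Rp) ^ (n + M * k) + X ^ (n + M * k + k)) := by
      have e : n + (M + 1) * k = n + M * k + k := by ring
      rw [e]
      linear_combination (-(X : Rp) ^ (n + M * k)) * two_eq_zero_poly
    rw [key]
    exact AddSubgroup.add_mem _ h1 h2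

theorem w_mem (hk : 0 < k) (n : ℕ) : (X : Rp) ^ n + X ^ (n + k) ∈ Kgrp k Rp := by
  rcases Nat.eq_zero_or_pos n with rfl | hn
  · have : (X : Rp) ^ 0 + X ^ (0 + k) = 1 ^ k + X ^ k := by simp
    rw [this]
    exact AddSubgroup.add_mem _ (Kgrp.pow_mem 1) (Kgrp.pow_mem X)
  · apply Kgrp.of_pow_two_pow_mem (j := k)
    have expand : ((X : Rp) ^ n + X ^ (n + k)) ^ 2 ^ k
        = (X : Rp) ^ (2 ^ k * n) + X ^ (2 ^ k * n + 2 ^ k * k) := by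
      rw [two_zero_add_pow_two_pow two_eq_zero_poly, ← pow_mul, ← pow_mul]
      ring_nf
    rw [expand]
    exact telescope_mem hk (2 ^ k) (2 ^ k * n)
      (le_trans (Nat.le_of_lt (Nat.lt_two_pow_self (n := k))) (Nat.le_mul_of_pos_right _ hn))

theorem ker_mul_mem (hk : 0 < k) (p : Rp) : ((X : Rp) ^ k - 1) * p ∈ Kgrp k Rp := by
  induction p using Polynomial.induction_on' with
  | add f g hf hg =>
    rw [mul_add]
    exact AddSubgroup.add_mem _ hf hg
  | monomial n a =>
    have ha : a = 0 ∨ a = 1 := by revert a; decide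
    rcases ha with rfl | rfl
    · simp only [map_zero, mul_zero]
      exact AddSubgroup.zero_mem _
    · have hmon : (monomial n (1 : ZMod 2) : Rp) = X ^ n := by
        rw [← Polynomial.C_mul_X_pow_eq_monomial]; simp
      rw [hmon]
      have key : ((X : Rp) ^ k - 1) * X ^ n =
          ((X : Rp) ^ n + X ^ (n + k)) - 2 * X ^ n := by ring
      rw [key, two_eq_zero_poly, zero_mul, sub_zero]
      exact w_mem hk n

theorem comp_mem {f r : Rp} (hk : 0 < k) (hf : f ∈ Kgrp k Rp) : f.comp r ∈ Kgrp k Rp := by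
  induction hf using AddSubgroup.closure_induction with
  | mem x hx =>
    obtain ⟨u, rfl⟩ | ⟨u, h, rfl⟩ := hx
    · rw [Polynomial.pow_comp]; exact Kgrp.pow_mem _
    · rw [Polynomial.mul_comp, Polynomial.pow_comp, Polynomial.add_comp, Polynomial.pow_comp]
      exact Kgrp.pow_mul_mem _ _
  | zero => simp only [Polynomial.zero_comp]; exact AddSubgroup.zero_mem _
  | add x y _ _ hx hy => rw [Polynomial.add_comp]; exact AddSubgroup.add_mem _ hx hy
  | neg x _ hx => rw [Polynomial.neg_comp]; exact AddSubgroup.neg_mem _ hx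

theorem top_of_one_add_X (hk : 0 < k) (h1X : 1 + (X : Rp) ∈ Kgrp k Rp) : Kgrp k Rp = ⊤ := by
  rw [eq_top_iff]
  rintro f -
  have h1 : ((1 : Rp) + X).comp f ∈ Kgrp k Rp := comp_mem hk h1X
  rw [Polynomial.add_comp, Polynomial.one_comp, Polynomial.X_comp] at h1
  have : f = (1 + f) - 1 := by ring
  rw [this]
  exact AddSubgroup.sub_mem _ h1 Kgrp.one_mem

end poly

theorem Kgrp.field_eq_top {k : ℕ} (hk : 0 < k) (h3 : ¬ 3 ∣ k)
    (F : Type*) [Field F] [Finite F] (h2 : (2 : F) = 0) : Kgrp k F = ⊤ := by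
  by_contra hne
  obtain ⟨v, hv⟩ : ∃ v : F, v ∉ Kgrp k F := by
    by_contra h
    push_neg at h
    exact hne (by ext u; simpa using h u)
  have hchar : ∀ a : F, a + a = 0 := fun a => by
    have : a + a = 2 * a := by ring
    rw [this, h2, zero_mul]
  have hneg : ∀ a : F, -a = a := fun a => by
    have h := hchar a; linear_combination -h
  -- the Artin–Schreier additive map
  let φ : F →+ F := AddMonoidHom.mk' (fun h => h + h ^ 2) (by
    intro a b
    have h4 : (2 : F) * (a * b) = 0 := by rw [h2, zero_mul]
    show (a + b) + (a + b) ^ 2 = (a + a ^ 2) + (b + b ^ 2)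
    linear_combination h4)
  have hφ : ∀ a : F, φ a = a + a ^ 2 := fun _ => rfl
  set A : AddSubgroup F := φ.range with hA
  have hAK : ∀ x ∈ A, x ∈ Kgrp k F := by
    rintro x ⟨h, rfl⟩
    exact Kgrp.as_mem h
  -- kernel of φ is {0, 1}
  have hker : (φ.ker : Set F) = {0, 1} := by
    ext x
    simp only [AddMonoidHom.mem_ker, hφ, Set.mem_insert_iff, Set.mem_singleton_iff,
      SetLike.mem_coe]
    constructor
    · intro hx
      have : x * (1 + x) = 0 := by linear_combination hx
      rcases mul_eq_zero.mp this with h | h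
      · exact Or.inl h
      · right
        have : x = -1 := by linear_combination h
        rw [this, hneg]
    · rintro (rfl | rfl)
      · simp
      · have := hchar 1
        linear_combination this
  -- cardinalities
  have hcardker : Nat.card φ.ker = 2 := by
    have : Nat.card φ.ker = Nat.card ({0, 1} : Set F) := by
      congr 1
      exact congrArg _ hker
    rw [this, Nat.card_coe_set_eq, Set.ncard_pair (one_ne_zero (α := F)).symm]
  have hcardQ : Nat.card (F ⧸ A) = 2 := by
    have h1 : Nat.card F = Nat.card (F ⧸ A) * Nat.card A :=
      AddSubgroup.card_eq_card_quotient_mul_card_addSubgroup A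
    have h2' : Nat.card F = Nat.card (F ⧸ φ.ker) * Nat.card φ.ker :=
      AddSubgroup.card_eq_card_quotient_mul_card_addSubgroup φ.ker
    have h3' : Nat.card (F ⧸ φ.ker) = Nat.card A := Nat.card_congr
      (QuotientAddGroup.quotientKerEquivRange φ).toEquiv
    have hApos : 0 < Nat.card A := Nat.card_pos
    rw [h3', hcardker] at h2'
    rw [h2'] at h1
    have := Nat.card_pos (α := A)
    nlinarith [h1, this]
  -- two elements not in A sum into A
  have hsum : ∀ u w : F, u ∉ A → w ∉ A → u + w ∈ A := by
    intro u w hu hw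
    have h0 : ((QuotientAddGroup.mk u : F ⧸ A)) ≠ 0 := by
      simpa [QuotientAddGroup.eq_zero_iff] using hu
    have h0' : ((QuotientAddGroup.mk w : F ⧸ A)) ≠ 0 := by
      simpa [QuotientAddGroup.eq_zero_iff] using hw
    have : (QuotientAddGroup.mk u : F ⧸ A) = QuotientAddGroup.mk w := by
      obtain ⟨y, hy1, hy2⟩ := (Nat.card_eq_two_iff' (0 : F ⧸ A)).mp hcardQ
      rw [hy2 _ h0, hy2 _ h0']
    have hsub : u - w ∈ A := by
      rwa [QuotientAddGroup.eq_iff_sub_mem] at this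
    have : u + w = u - w := by
      have := hchar w; linear_combination this
    rwa [this]
  -- K is contained in A
  have hKA : ∀ x ∈ Kgrp k F, x ∈ A := by
    intro p hp
    by_contra hpA
    apply hv
    by_cases hvA : v ∈ A
    · exact hAK v hvA
    · have : v + p ∈ A := hsum v p hvA hpA
      have hvp : v = (v + p) - p := by ring
      rw [hvp]
      exact AddSubgroup.sub_mem _ (hAK _ this) hp
  -- 1 is in A, giving a cube root of unity
  obtain ⟨ω, hω⟩ : ∃ ω : F, ω + ω ^ 2 = 1 := by
    obtain ⟨ω, hω⟩ := hKA 1 Kgrp.one_mem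
    exact ⟨ω, hω⟩
  have hω0 : ω ≠ 0 := by
    intro h; rw [h] at hω; simp at hω
  have hω1 : ω ≠ 1 := by
    intro h
    rw [h] at hω
    have h11 := hchar 1
    rw [one_pow] at hω
    rw [hω] at h11
    simpa using h11
  have hωsq : ω ^ 2 = 1 + ω := by
    linear_combination hω - hchar ω
  have hω3 : ω ^ 3 = 1 := by
    have h' : ω ^ 3 = ω * ω ^ 2 := by ring
    rw [h', hωsq]
    linear_combination hω
  by_cases hc : ∀ u : F, u ^ k = 0 ∨ u ^ k = 1
  · -- all k-th powers are 0 or 1 : contradiction with 3 ∤ k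
    have hωk : ω ^ k = 1 := (hc ω).resolve_left (pow_ne_zero _ hω0)
    have hmod : ω ^ k = ω ^ (k % 3) := by
      conv_lhs => rw [← Nat.div_add_mod k 3]
      rw [pow_add, pow_mul, hω3, one_pow, one_mul]
    have h30 : k % 3 = 1 ∨ k % 3 = 2 := by
      have : k % 3 ≠ 0 := fun h => h3 (Nat.dvd_of_mod_eq_zero h)
      omega
    rcases h30 with h | h
    · rw [h, pow_one] at hmod
      exact hω1 (by rw [← hmod, hωk])
    · rw [h] at hmod
      rw [hωk, hωsq] at hmod
      have : ω = 0 := by linear_combination -hmod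
      exact hω0 this
  · -- there is a k-th power c ∉ {0,1}
    push_neg at hc
    obtain ⟨u₀, hc0, hc1⟩ := hc
    set c : F := u₀ ^ k with hcdef
    -- multiplication by polynomials in c stabilizes K
    have stab : ∀ p ∈ Subring.closure ({c} : Set F), ∀ x ∈ Kgrp k F, p * x ∈ Kgrp k F := by
      intro p hp
      induction hp using Subring.closure_induction with
      | mem y hy =>
        rcases hy with rfl
        intro x hx
        obtain ⟨h, rfl⟩ := hKA x hx
        exact Kgrp.pow_mul_mem u₀ h
      | zero => intro x hx; rw [zero_mul]; exact AddSubgroup.zero_mem _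
      | one => intro x hx; rwa [one_mul]
      | add a b _ _ ha hb => intro x hx; rw [add_mul]; exact AddSubgroup.add_mem _ (ha x hx) (hb x hx)
      | neg a _ ha => intro x hx; rw [neg_mul]; exact AddSubgroup.neg_mem _ (ha x hx)
      | mul a b _ _ ha hb => intro x hx; rw [mul_assoc]; exact ha _ (hb x hx)
    -- find t₀ ≠ 0 in the closure with t₀ * v ∈ K
    obtain ⟨t₀, ht₀cl, ht₀0, ht₀v⟩ : ∃ t₀ : F, t₀ ∈ Subring.closure ({c} : Set F) ∧ t₀ ≠ 0 ∧
        t₀ * v ∈ Kgrp k F := by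
      by_cases hcv : c * v ∈ Kgrp k F
      · exact ⟨c, Subring.subset_closure rfl, hc0, hcv⟩
      · refine ⟨1 + c, ?_, ?_, ?_⟩
        · exact Subring.add_mem _ (Subring.one_mem _) (Subring.subset_closure rfl)
        · intro h
          apply hc1
          linear_combination -h + hchar c
        · have hvA : v ∉ A := fun h => hv (hAK v h)
          have hcvA : c * v ∉ A := fun h => hcv (hAK _ h)
          have : v + c * v ∈ A := hsum _ _ hvA hcvA
          have heq : (1 + c) * v = v + c * v := by ring
          rw [heq]
          exact hAK _ this
    -- conclude v ∈ K : contradiction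
    apply hv
    have := Fintype.ofFinite F
    have hq2 : 2 ≤ Fintype.card F := Fintype.one_lt_card
    have hpow1 : t₀ ^ (Fintype.card F - 1) = 1 := FiniteField.pow_card_sub_one_eq_one t₀ ht₀0
    have hvrw : v = t₀ ^ (Fintype.card F - 2) * (t₀ * v) := by
      rw [← mul_assoc, ← pow_succ]
      have : Fintype.card F - 2 + 1 = Fintype.card F - 1 := by omega
      rw [this, hpow1, one_mul]
    rw [hvrw]
    exact stab _ (Subring.pow_mem _ ht₀cl _) _ ht₀v


section transfer
variable {k : ℕ}

theorem Kgrp.ringHom_mem {R S : Type*} [CommRing R] [CommRing S] (φ : R →+* S) {f : R}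
    (hf : f ∈ Kgrp k R) : φ f ∈ Kgrp k S := by
  induction hf using AddSubgroup.closure_induction with
  | mem x hx =>
    obtain ⟨u, rfl⟩ | ⟨u, h, rfl⟩ := hx
    · rw [map_pow]; exact AddSubgroup.subset_closure (Or.inl ⟨φ u, rfl⟩)
    · rw [map_mul, map_pow, map_add, map_pow]
      exact AddSubgroup.subset_closure (Or.inr ⟨φ u, φ h, rfl⟩)
  | zero => rw [map_zero]; exact AddSubgroup.zero_mem _
  | add x y _ _ hx hy => rw [map_add]; exact AddSubgroup.add_mem _ hx hy
  | neg x _ hx => rw [map_neg]; exact AddSubgroup.neg_mem _ hx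

theorem Kgrp.exists_preimage {R S : Type*} [CommRing R] [CommRing S] (φ : R →+* S)
    (hφ : Function.Surjective φ) {u : S} (hu : u ∈ Kgrp k S) :
    ∃ f ∈ Kgrp k R, φ f = u := by
  induction hu using AddSubgroup.closure_induction with
  | mem x hx =>
    obtain ⟨u, rfl⟩ | ⟨u, h, rfl⟩ := hx
    · obtain ⟨g, rfl⟩ := hφ u
      exact ⟨g ^ k, AddSubgroup.subset_closure (Or.inl ⟨g, rfl⟩), by rw [map_pow]⟩
    · obtain ⟨g, rfl⟩ := hφ u
      obtain ⟨h', rfl⟩ := hφ h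
      exact ⟨g ^ k * (h' + h' ^ 2), AddSubgroup.subset_closure (Or.inr ⟨g, h', rfl⟩), by
        rw [map_mul, map_pow, map_add, map_pow]⟩
  | zero => exact ⟨0, AddSubgroup.zero_mem _, map_zero φ⟩
  | add x y _ _ hx hy =>
    obtain ⟨f, hf, rfl⟩ := hx
    obtain ⟨g, hg, rfl⟩ := hy
    exact ⟨f + g, AddSubgroup.add_mem _ hf hg, map_add φ _ _⟩
  | neg x _ hx =>
    obtain ⟨f, hf, rfl⟩ := hx
    exact ⟨-f, AddSubgroup.neg_mem _ hf, map_neg φ _⟩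

theorem Kgrp.top_of_equiv {R S : Type*} [CommRing R] [CommRing S] (e : R ≃+* S)
    (h : Kgrp k R = ⊤) : Kgrp k S = ⊤ := by
  rw [eq_top_iff]
  rintro u -
  have : e.symm u ∈ Kgrp k R := h ▸ AddSubgroup.mem_top _
  have h2 := Kgrp.ringHom_mem (e : R →+* S) this
  simpa using h2

theorem Kgrp.pi_top {ι : Type*} [Fintype ι] (F : ι → Type*) [∀ i, CommRing (F i)]
    (hk : 0 < k) (h : ∀ i, Kgrp k (F i) = ⊤) : Kgrp k (∀ i, F i) = ⊤ := by
  classical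
  have single_mem : ∀ (i : ι) (v : F i), Pi.single i v ∈ Kgrp k (∀ i, F i) := by
    intro i v
    have hv : v ∈ Kgrp k (F i) := (h i) ▸ AddSubgroup.mem_top _
    induction hv using AddSubgroup.closure_induction with
    | mem x hx =>
      obtain ⟨u, rfl⟩ | ⟨u, w, rfl⟩ := hx
      · have : Pi.single i (u ^ k) = (Pi.single i u) ^ k := by
          funext j
          rcases eq_or_ne j i with rfl | hne
          · simp
          · simp [Pi.single_eq_of_ne hne, zero_pow hk.ne']
        rw [this]
        exact AddSubgroup.subset_closure (Or.inl ⟨_, rfl⟩)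
      · have : Pi.single i (u ^ k * (w + w ^ 2)) =
            (Pi.single i u) ^ k * (Pi.single i w + (Pi.single i w) ^ 2) := by
          funext j
          rcases eq_or_ne j i with rfl | hne
          · simp
          · simp [Pi.single_eq_of_ne hne, zero_pow hk.ne']
        rw [this]
        exact AddSubgroup.subset_closure (Or.inr ⟨_, _, rfl⟩)
    | zero => rw [Pi.single_zero]; exact AddSubgroup.zero_mem _
    | add x y _ _ hx hy => rw [Pi.single_add]; exact AddSubgroup.add_mem _ hx hy
    | neg x _ hx => rw [Pi.single_neg]; exact AddSubgroup.neg_mem _ hx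
  rw [eq_top_iff]
  rintro u -
  have : u = ∑ i, Pi.single i (u i) := by
    funext j
    rw [Finset.sum_apply]
    exact (Fintype.sum_pi_single j u).symm
  rw [this]
  exact AddSubgroup.sum_mem _ fun i _ => single_mem i (u i)

end transfer


section quotpart

local notation "Rp" => Polynomial (ZMod 2)

theorem poly_sq (f : Rp) : f ^ 2 = expand (ZMod 2) 2 f := by
  have h := Polynomial.map_frobenius_expand 2 f
  rw [ZMod.frobenius_zmod, Polynomial.map_id] at h
  exact h.symm

theorem poly_pow_two_pow (f : Rp) (D : ℕ) : f ^ (2 ^ D) = f.comp (X ^ (2 ^ D)) := by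
  induction D with
  | zero => simp
  | succ D ih =>
    have h1 : f ^ (2 ^ (D + 1)) = (f ^ (2 ^ D)) ^ 2 := by
      rw [← pow_mul, pow_succ]
    rw [h1, ih, poly_sq, Polynomial.expand_eq_comp_X_pow, Polynomial.comp_assoc]
    congr 1
    rw [Polynomial.pow_comp, Polynomial.X_comp, ← pow_mul, pow_succ, Nat.mul_comm]

theorem sub_dvd_comp_sub {R : Type*} [CommRing R] (f a b : R[X]) :
    a - b ∣ f.comp a - f.comp b := by
  induction f using Polynomial.induction_on' with
  | add p q hp hq =>
    rw [Polynomial.add_comp, Polynomial.add_comp]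
    have key : p.comp a + q.comp a - (p.comp b + q.comp b)
        = (p.comp a - p.comp b) + (q.comp a - q.comp b) := by ring
    rw [key]
    exact dvd_add hp hq
  | monomial n c =>
    rw [Polynomial.monomial_comp, Polynomial.monomial_comp]
    have key : C c * a ^ n - C c * b ^ n = C c * (a ^ n - b ^ n) := by ring
    rw [key]
    exact Dvd.dvd.mul_left (sub_dvd_pow_sub_pow a b n) _

theorem dvd_pow_two_pow_sub (k D c : ℕ) (hD : 2 ^ D = c * k + 1) (f : Rp) :
    (X : Rp) ^ k - 1 ∣ f ^ (2 ^ D) - f := by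
  have h1 : f ^ (2 ^ D) - f = f.comp (X ^ (2 ^ D)) - f.comp X := by
    rw [poly_pow_two_pow, Polynomial.comp_X]
  rw [h1]
  have h2 : (X : Rp) ^ k - 1 ∣ (X : Rp) ^ (2 ^ D) - X := by
    have e1 : (X : Rp) ^ (2 ^ D) - X = X * (((X : Rp) ^ k) ^ c - 1 ^ c) := by
      rw [hD, one_pow, ← pow_mul, mul_sub, mul_one]
      rw [← pow_succ']
      congr 1
      ring
    rw [e1]
    exact Dvd.dvd.mul_left (sub_dvd_pow_sub_pow _ _ _) _
  exact dvd_trans h2 (sub_dvd_comp_sub f _ X)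

section Qring
variable {k D c : ℕ} (hk : 0 < k) (hD : 2 ^ D = c * k + 1) (hD1 : 0 < D)

local notation "Q" => AdjoinRoot ((X : Rp) ^ k - 1)

theorem two_eq_zero_Q : (2 : AdjoinRoot ((X : Rp) ^ k - 1)) = 0 := by
  have : (2 : AdjoinRoot ((X : Rp) ^ k - 1)) = (AdjoinRoot.mk _) (2 : Rp) := by
    rw [map_ofNat]
  rw [this, two_eq_zero_poly, map_zero]

include hD in
theorem Q_pow_id (u : AdjoinRoot ((X : Rp) ^ k - 1)) : u ^ (2 ^ D) = u := by
  obtain ⟨f, rfl⟩ := AdjoinRoot.mk_surjective (g := (X : Rp) ^ k - 1) u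
  have : (AdjoinRoot.mk ((X : Rp) ^ k - 1) f) ^ (2 ^ D) - AdjoinRoot.mk ((X : Rp) ^ k - 1) f
      = AdjoinRoot.mk ((X : Rp) ^ k - 1) (f ^ (2 ^ D) - f) := by
    rw [map_sub, map_pow]
  have h0 : (AdjoinRoot.mk ((X : Rp) ^ k - 1)) (f ^ (2 ^ D) - f) = 0 :=
    AdjoinRoot.mk_eq_zero.mpr (dvd_pow_two_pow_sub k D c hD f)
  rw [← sub_eq_zero, this, h0]

include hD hD1 in
theorem Q_reduced : IsReduced (AdjoinRoot ((X : Rp) ^ k - 1)) := by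
  rw [isReduced_iff]
  rintro x ⟨n, hn⟩
  have iter : ∀ t : ℕ, x ^ (2 ^ (D * t)) = x := by
    intro t
    induction t with
    | zero => simp
    | succ t ih =>
      have : x ^ 2 ^ (D * (t + 1)) = (x ^ 2 ^ (D * t)) ^ 2 ^ D := by
        rw [← pow_mul, ← pow_add, Nat.mul_add, Nat.mul_one]
      rw [this, ih, Q_pow_id hD]
  have hbig : n ≤ 2 ^ (D * n) := by
    calc n ≤ 2 ^ n := Nat.le_of_lt (Nat.lt_two_pow_self (n := n))
    _ ≤ 2 ^ (D * n) := Nat.pow_le_pow_right (by norm_num) (Nat.le_mul_of_pos_left n hD1)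
  have : x ^ (2 ^ (D * n)) = 0 := by
    obtain ⟨m, hm⟩ := Nat.exists_eq_add_of_le hbig
    rw [hm, pow_add, hn, zero_mul]
  rw [← iter n, this]

include hk in
theorem Q_finite : Finite (AdjoinRoot ((X : Rp) ^ k - 1)) := by
  have hmonic : ((X : Rp) ^ k - 1).Monic := by
    have := Polynomial.monic_X_pow_sub_C (1 : ZMod 2) hk.ne'
    simpa using this
  have : Module.Finite (ZMod 2) (AdjoinRoot ((X : Rp) ^ k - 1)) :=
    Module.Finite.of_basis (AdjoinRoot.powerBasis' hmonic).basis
  exact Module.finite_of_finite (ZMod 2)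

end Qring
end quotpart

section final

local notation "Rp" => Polynomial (ZMod 2)

theorem Q_top {k D c : ℕ} (hk : 0 < k) (h3 : ¬ 3 ∣ k) (hD : 2 ^ D = c * k + 1) (hD1 : 0 < D) :
    Kgrp k (AdjoinRoot ((X : Rp) ^ k - 1)) = ⊤ := by
  haveI hfin : Finite (AdjoinRoot ((X : Rp) ^ k - 1)) := Q_finite hk
  haveI hred : IsReduced (AdjoinRoot ((X : Rp) ^ k - 1)) := Q_reduced hD hD1
  set Qr := AdjoinRoot ((X : Rp) ^ k - 1) with hQr
  haveI : IsArtinianRing Qr := inferInstance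
  haveI : Finite (MaximalSpectrum Qr) := inferInstance
  haveI : Fintype (MaximalSpectrum Qr) := Fintype.ofFinite _
  have hfactors : ∀ I : MaximalSpectrum Qr, Kgrp k (Qr ⧸ I.asIdeal) = ⊤ := by
    intro I
    haveI hmax : I.asIdeal.IsMaximal := I.isMaximal
    letI : Field (Qr ⧸ I.asIdeal) := Ideal.Quotient.field I.asIdeal
    haveI : Finite (Qr ⧸ I.asIdeal) := Quotient.finite _
    have h2 : (2 : Qr ⧸ I.asIdeal) = 0 := by
      have h2' : (2 : Qr ⧸ I.asIdeal) = (Ideal.Quotient.mk I.asIdeal) (2 : Qr) := (map_ofNat _ 2).symm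
      rw [h2', two_eq_zero_Q, map_zero]
    exact Kgrp.field_eq_top hk h3 _ h2
  have hpi : Kgrp k (∀ I : MaximalSpectrum Qr, Qr ⧸ I.asIdeal) = ⊤ :=
    Kgrp.pi_top _ hk hfactors
  exact Kgrp.top_of_equiv (IsArtinianRing.equivPi Qr).symm.toRingEquiv hpi

theorem main_odd {k : ℕ} (hk : 0 < k) (h2 : ¬ 2 ∣ k) (h3 : ¬ 3 ∣ k) :
    Kgrp k Rp = ⊤ := by
  have hcop : Nat.Coprime 2 k := (Nat.prime_two.coprime_iff_not_dvd).mpr h2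
  have hmod : 2 ^ Nat.totient k ≡ 1 [MOD k] := Nat.ModEq.pow_totient hcop
  have hD1 : 0 < Nat.totient k := Nat.totient_pos.mpr hk
  have h1le : 1 ≤ 2 ^ Nat.totient k := Nat.one_le_two_pow
  have hdvd : k ∣ 2 ^ Nat.totient k - 1 := (Nat.modEq_iff_dvd' h1le).mp hmod.symm
  obtain ⟨c, hc⟩ := hdvd
  have hD : 2 ^ Nat.totient k = c * k + 1 := by
    have := (Nat.sub_eq_iff_eq_add h1le).mp hc
    rw [this, Nat.mul_comm]
  have hQtop := Q_top hk h3 hD hD1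
  have hx : (AdjoinRoot.mk ((X : Rp) ^ k - 1)) (1 + X) ∈ Kgrp k (AdjoinRoot ((X : Rp) ^ k - 1)) := by
    rw [hQtop]; trivial
  obtain ⟨Fq, hF, hFx⟩ := Kgrp.exists_preimage _ AdjoinRoot.mk_surjective hx
  have h0 : AdjoinRoot.mk ((X : Rp) ^ k - 1) (Fq - (1 + X)) = 0 := by
    rw [map_sub, hFx, sub_self]
  obtain ⟨r, hr⟩ := AdjoinRoot.mk_eq_zero.mp h0
  have he : (1 : Rp) + X = Fq - ((X : Rp) ^ k - 1) * r := by rw [← hr]; ring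
  apply top_of_one_add_X hk
  rw [he]
  exact AddSubgroup.sub_mem _ hF (ker_mul_mem hk r)

theorem Kgrp_le_of (a q : ℕ) : Kgrp q Rp ≤ Kgrp (2 ^ a * q) Rp := by
  apply (AddSubgroup.closure_le _).mpr
  rintro r (⟨g, rfl⟩ | ⟨g, h, rfl⟩)
  · apply Kgrp.of_pow_two_pow_mem (j := a)
    have e : (g ^ q) ^ (2 ^ a) = g ^ (2 ^ a * q) := by rw [← pow_mul, Nat.mul_comm]
    rw [e]
    exact Kgrp.pow_mem g
  · apply Kgrp.of_pow_two_pow_mem (j := a)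
    have e : (g ^ q * (h + h ^ 2)) ^ (2 ^ a)
        = g ^ (2 ^ a * q) * (h ^ (2 ^ a) + (h ^ (2 ^ a)) ^ 2) := by
      rw [mul_pow, ← pow_mul, Nat.mul_comm q, two_zero_add_pow_two_pow two_eq_zero_poly]
      congr 1
      rw [← pow_mul, ← pow_mul, Nat.mul_comm 2]
    rw [e]
    exact Kgrp.pow_mul_mem _ _

/-- For `k` a positive integer not divisible by `3`, `K(k, 𝔽₂[x]) = 𝔽₂[x]`. -/
theorem Kgrp_poly_eq_top (k : ℕ) (hk : 0 < k) (h3 : ¬ 3 ∣ k) :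
    Kgrp k (Polynomial (ZMod 2)) = ⊤ := by
  have key : ∀ a q : ℕ, 0 < q → ¬ 2 ∣ q → ¬ 3 ∣ q → Kgrp (2 ^ a * q) Rp = ⊤ := by
    intro a q h1 h2' h3'
    rw [eq_top_iff]
    have hle := Kgrp_le_of a q
    rwa [main_odd h1 h2' h3'] at hle
  have hq0 : 0 < (k / 2 ^ (k.factorization 2)) := Nat.ordCompl_pos 2 hk.ne'
  have hq2 : ¬ 2 ∣ (k / 2 ^ (k.factorization 2)) := Nat.not_dvd_ordCompl Nat.prime_two hk.ne'
  have hq3 : ¬ 3 ∣ (k / 2 ^ (k.factorization 2)) := fun hd => h3 (hd.trans (Nat.ordCompl_dvd k 2))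
  have := key (k.factorization 2) ((k / 2 ^ (k.factorization 2))) hq0 hq2 hq3
  rwa [Nat.ordProj_mul_ordCompl_eq_self k 2] at this

end final
end

section
/- Let $k$ be a positive integer, let $I$ be an ideal of $\mathbb{F}_2[x]$, and let $f \in \mathbb{F}_2[x]$. If the residue class of $f$ in $\mathbb{F}_2[x]/I$ lies in $K(k, \mathbb{F}_2[x]/I)$, then the residue class of $f$ in $\mathbb{F}_2[x]/I^2$ lies in $K(k, \mathbb{F}_2[x]/I^2)$. -/
open Polynomial
lemma Kgrp_map {R S : Type*} [CommRing R] [CommRing S] (k : ℕ) (π : R →+* S)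
    (hπ : Function.Surjective π) :
    (Kgrp k R).map π.toAddMonoidHom = Kgrp k S := by
  rw [Kgrp, Kgrp, AddMonoidHom.map_closure]
  congr 1
  ext r
  constructor
  · rintro ⟨x, (⟨g, rfl⟩ | ⟨g, h, rfl⟩), rfl⟩
    · exact Or.inl ⟨π g, by simp⟩
    · exact Or.inr ⟨π g, π h, by simp⟩
  · rintro (⟨g, rfl⟩ | ⟨g, h, rfl⟩)
    · obtain ⟨g', rfl⟩ := hπ g
      exact ⟨g' ^ k, Or.inl ⟨g', rfl⟩, by simp⟩
    · obtain ⟨g', rfl⟩ := hπ g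
      obtain ⟨h', rfl⟩ := hπ h
      exact ⟨g' ^ k * (h' + h' ^ 2), Or.inr ⟨g', h', rfl⟩, by simp⟩

/-- If the residue class of `f` in `𝔽₂[x]/I` lies in `K(k, 𝔽₂[x]/I)`, then the residue
class of `f` in `𝔽₂[x]/I²` lies in `K(k, 𝔽₂[x]/I²)`. -/
theorem Kgrp_lift_sq (k : ℕ) (hk : 0 < k) (I : Ideal (Polynomial (ZMod 2)))
    (f : Polynomial (ZMod 2))
    (hf : Ideal.Quotient.mk I f ∈ Kgrp k (Polynomial (ZMod 2) ⧸ I)) :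
    Ideal.Quotient.mk (I ^ 2) f ∈ Kgrp k (Polynomial (ZMod 2) ⧸ I ^ 2) := by
  have hle : I ^ 2 ≤ I := Ideal.pow_le_self two_ne_zero
  set π : (Polynomial (ZMod 2) ⧸ I ^ 2) →+* (Polynomial (ZMod 2) ⧸ I) :=
    Ideal.Quotient.factor hle with hπdef
  have hπmk : ∀ x, π (Ideal.Quotient.mk (I ^ 2) x) = Ideal.Quotient.mk I x := by
    intro x; simp [hπdef]
  have hπ : Function.Surjective π := by
    intro y
    obtain ⟨x, rfl⟩ := Ideal.Quotient.mk_surjective y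
    exact ⟨Ideal.Quotient.mk (I ^ 2) x, hπmk x⟩
  rw [← Kgrp_map k π hπ] at hf
  obtain ⟨z, hz, hzf⟩ := hf
  obtain ⟨w, rfl⟩ := Ideal.Quotient.mk_surjective z
  have hfw : f - w ∈ I := by
    rw [← Ideal.Quotient.eq_zero_iff_mem, map_sub, sub_eq_zero]
    have hzf' : π (Ideal.Quotient.mk (I ^ 2) w) = Ideal.Quotient.mk I f := hzf
    rw [hπmk] at hzf'
    exact hzf'.symm
  have key : Ideal.Quotient.mk (I ^ 2) (f - w) ∈
      Kgrp k (Polynomial (ZMod 2) ⧸ I ^ 2) := by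
    apply AddSubgroup.subset_closure
    refine Or.inr ⟨1, Ideal.Quotient.mk (I ^ 2) (f - w), ?_⟩
    have hsq : Ideal.Quotient.mk (I ^ 2) (f - w) ^ 2 = 0 := by
      rw [← map_pow, Ideal.Quotient.eq_zero_iff_mem]
      exact Ideal.pow_mem_pow hfw 2
    rw [one_pow, hsq, add_zero, one_mul]
  have : Ideal.Quotient.mk (I ^ 2) f =
      Ideal.Quotient.mk (I ^ 2) w + Ideal.Quotient.mk (I ^ 2) (f - w) := by
    rw [← map_add]; ring_nf
  rw [this]
  exact AddSubgroup.add_mem _ hz key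
end
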